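/- arXiv:2506.13512 — 4 statements merged into one kernel-verified Lean document; each statement's English description precedes it below -/
import Mathlib

section
/- (Real bipolar theorem, finite-dimensional form.) Fix d ≥ 1 and let K be a closed real matrix convex set over ℝ^d with 0 ∈ K_1. Define the second polar by (K°°)_n = {x ∈ (M_n(ℝ))^d : for every m and every A ∈ (K°)_m, ℜ⟨x, A⟩ ≤ 1_{nm}}. Then (K°°)_n = K_n for every n. -/
open Matrix
open scoped Kronecker

/-- Block-diagonal direct sum of square matrices. -/
def dsum {α : Type*} [Zero α] {m p : ℕ} (A : Matrix (Fin m) (Fin m) α)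
    (B : Matrix (Fin p) (Fin p) α) : Matrix (Fin (m + p)) (Fin (m + p)) α :=
  Matrix.reindex finSumFinEquiv finSumFinEquiv (Matrix.fromBlocks A 0 0 B)

/-- A real matrix convex set over `ℝ^d`: a graded family of sets of `d`-tuples of square
real matrices, closed under direct sums and under compressions by real isometries. -/
def IsRealMatrixConvex (d : ℕ) (K : ∀ n : ℕ, Set (Fin d → Matrix (Fin n) (Fin n) ℝ)) : Prop :=
  (∀ (m p : ℕ) (x : Fin d → Matrix (Fin m) (Fin m) ℝ) (y : Fin d → Matrix (Fin p) (Fin p) ℝ),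
    x ∈ K m → y ∈ K p → (fun j => dsum (x j) (y j)) ∈ K (m + p)) ∧
  (∀ (m p : ℕ) (x : Fin d → Matrix (Fin m) (Fin m) ℝ) (β : Matrix (Fin m) (Fin p) ℝ),
    x ∈ K m → βᵀ * β = 1 → (fun j => βᵀ * x j * β) ∈ K p)

/-- `ℜ M = (M + Mᵀ)/2`. -/
noncomputable def reSym {n : Type*} (M : Matrix n n ℝ) : Matrix n n ℝ := (2 : ℝ)⁻¹ • (M + Mᵀ)

/-- The Loewner order: `A ≤ B` iff `B - A` is positive semidefinite. -/
def loewnerLE {R : Type*} [CommRing R] [PartialOrder R] [StarRing R] {n : Type*} [Fintype n]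
    (A B : Matrix n n R) : Prop :=
  (B - A).PosSemidef

/-- `⟨x, A⟩ = Σ_j x_j ⊗ A_j` (Kronecker products). -/
noncomputable def pairing {d m n : ℕ} (x : Fin d → Matrix (Fin m) (Fin m) ℝ)
    (A : Fin d → Matrix (Fin n) (Fin n) ℝ) : Matrix (Fin m × Fin n) (Fin m × Fin n) ℝ :=
  ∑ j, x j ⊗ₖ A j

/-- The polar of a graded family `K`: at level `n`, the tuples `A` with
`ℜ⟨x, A⟩ ≤ 1_{mn}` for every `m` and every `x ∈ K_m`. -/
def matPolar (d : ℕ) (K : ∀ n : ℕ, Set (Fin d → Matrix (Fin n) (Fin n) ℝ)) (n : ℕ) :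
    Set (Fin d → Matrix (Fin n) (Fin n) ℝ) :=
  {A | ∀ (m : ℕ) (x : Fin d → Matrix (Fin m) (Fin m) ℝ), x ∈ K m →
    loewnerLE (reSym (pairing x A)) 1}

section
open scoped MatrixOrder
lemma exists_sqrt_real {n : ℕ} {M : Matrix (Fin n) (Fin n) ℝ} (hM : M.PosSemidef) :
    ∃ W : Matrix (Fin n) (Fin n) ℝ, W.PosSemidef ∧ W * W = M :=
  ⟨CFC.sqrt M, (CFC.sqrt_nonneg M).posSemidef, CFC.sqrt_mul_sqrt_self M hM.nonneg⟩
end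

namespace Bipolar

attribute [local instance] Matrix.normedAddCommGroup Matrix.normedSpace

instance instFCmat {a b : ℕ} : FirstCountableTopology (Matrix (Fin a) (Fin b) ℝ) :=
  inferInstanceAs (FirstCountableTopology (Fin a → Fin b → ℝ))
instance instLCmat {a b : ℕ} : LocallyConvexSpace ℝ (Matrix (Fin a) (Fin b) ℝ) :=
  inferInstanceAs (LocallyConvexSpace ℝ (Fin a → Fin b → ℝ))

/-! ### generalities -/

/-- reshape a vector over a product index into a matrix -/
def matify {p n : ℕ} (v : Fin p × Fin n → ℝ) : Matrix (Fin p) (Fin n) ℝ :=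
  Matrix.of fun i k => v (i, k)

lemma sum_reorder {a b c e g : ℕ} (f : Fin a → Fin b → Fin c → Fin e → Fin g → ℝ) :
    ∑ i, ∑ k, ∑ i2, ∑ l, ∑ j, f i k i2 l j
      = ∑ j, ∑ k, ∑ l, ∑ i2, ∑ i, f i k i2 l j := by
  trans ∑ i, ∑ k, ∑ i2, ∑ j, ∑ l, f i k i2 l j
  · exact Finset.sum_congr rfl fun i _ => Finset.sum_congr rfl fun k _ =>
      Finset.sum_congr rfl fun i2 _ => Finset.sum_comm
  trans ∑ i, ∑ k, ∑ j, ∑ i2, ∑ l, f i k i2 l j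
  · exact Finset.sum_congr rfl fun i _ => Finset.sum_congr rfl fun k _ => Finset.sum_comm
  trans ∑ i, ∑ j, ∑ k, ∑ i2, ∑ l, f i k i2 l j
  · exact Finset.sum_congr rfl fun i _ => Finset.sum_comm
  trans ∑ j, ∑ i, ∑ k, ∑ i2, ∑ l, f i k i2 l j
  · exact Finset.sum_comm
  refine Finset.sum_congr rfl fun j _ => ?_
  trans ∑ k, ∑ i, ∑ i2, ∑ l, f i k i2 l j
  · exact Finset.sum_comm
  refine Finset.sum_congr rfl fun k _ => ?_
  trans ∑ i, ∑ l, ∑ i2, f i k i2 l j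
  · exact Finset.sum_congr rfl fun i _ => Finset.sum_comm
  trans ∑ l, ∑ i, ∑ i2, f i k i2 l j
  · exact Finset.sum_comm
  exact Finset.sum_congr rfl fun l _ => Finset.sum_comm

set_option maxHeartbeats 1000000 in
lemma quad_pairing {d p n : ℕ} (y : Fin d → Matrix (Fin p) (Fin p) ℝ)
    (A : Fin d → Matrix (Fin n) (Fin n) ℝ) (v : Fin p × Fin n → ℝ) :
    v ⬝ᵥ (pairing y A *ᵥ v) = ∑ j, ((matify v)ᵀ * y j * matify v * (A j)ᵀ).trace := by
  simp only [pairing, dotProduct, Matrix.mulVec, Matrix.trace, Matrix.diag_apply,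
    Matrix.mul_apply, Matrix.sum_apply, kroneckerMap_apply, Matrix.transpose_apply,
    matify, Matrix.of_apply, Fintype.sum_prod_type, Finset.sum_mul, Finset.mul_sum,
    dotProduct]
  calc ∑ i : Fin p, ∑ k : Fin n, ∑ i2 : Fin p, ∑ l : Fin n, ∑ j : Fin d,
        v (i, k) * (y j i i2 * A j k l * v (i2, l))
      = ∑ j : Fin d, ∑ k : Fin n, ∑ l : Fin n, ∑ i2 : Fin p, ∑ i : Fin p,
        v (i, k) * (y j i i2 * A j k l * v (i2, l)) :=
        sum_reorder (fun i k i2 l j => v (i, k) * (y j i i2 * A j k l * v (i2, l)))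
    _ = ∑ j : Fin d, ∑ k : Fin n, ∑ l : Fin n, ∑ i2 : Fin p, ∑ i : Fin p,
        v (i, k) * y j i i2 * v (i2, l) * A j k l :=
        Finset.sum_congr rfl fun j _ => Finset.sum_congr rfl fun k _ =>
          Finset.sum_congr rfl fun l _ => Finset.sum_congr rfl fun i2 _ =>
            Finset.sum_congr rfl fun i _ => by ring

lemma dot_self_eq {p n : ℕ} (v : Fin p × Fin n → ℝ) :
    v ⬝ᵥ v = ((matify v)ᵀ * matify v).trace := by
  simp only [dotProduct, Matrix.trace, Matrix.diag_apply, Matrix.mul_apply,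
    Matrix.transpose_apply, matify, Matrix.of_apply, Fintype.sum_prod_type]
  rw [Finset.sum_comm]

lemma loewner_iff {ι : Type*} [Fintype ι] [DecidableEq ι] (M : Matrix ι ι ℝ) :
    loewnerLE (reSym M) 1 ↔ ∀ v : ι → ℝ, v ⬝ᵥ (M *ᵥ v) ≤ v ⬝ᵥ v := by
  have key : ∀ v : ι → ℝ, v ⬝ᵥ (reSym M *ᵥ v) = v ⬝ᵥ (M *ᵥ v) := by
    intro v
    have h2 : v ⬝ᵥ (Mᵀ *ᵥ v) = v ⬝ᵥ (M *ᵥ v) := by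
      rw [Matrix.dotProduct_mulVec, Matrix.vecMul_transpose, dotProduct_comm]
    simp [reSym, Matrix.add_mulVec, Matrix.smul_mulVec, dotProduct_add,
      dotProduct_smul, h2, smul_eq_mul]
    ring
  constructor
  · intro h v
    have := h.dotProduct_mulVec_nonneg v
    simp only [star_trivial, Matrix.sub_mulVec, Matrix.one_mulVec, dotProduct_sub] at this
    have := sub_nonneg.mp this
    calc v ⬝ᵥ (M *ᵥ v) = v ⬝ᵥ (reSym M *ᵥ v) := (key v).symm
      _ ≤ v ⬝ᵥ v := this
  · intro h
    refine Matrix.PosSemidef.of_dotProduct_mulVec_nonneg ?_ ?_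
    · have : (reSym M).IsHermitian := by
        unfold Matrix.IsHermitian
        rw [conjTranspose_eq_transpose_of_trivial]
        simp [reSym, transpose_add, transpose_smul]
        rw [add_comm]
      unfold Matrix.IsHermitian at this ⊢
      rw [conjTranspose_eq_transpose_of_trivial] at *
      simp [transpose_sub, this]
    · intro v
      simp only [star_trivial, Matrix.sub_mulVec, Matrix.one_mulVec, dotProduct_sub]
      rw [key v]
      exact sub_nonneg.mpr (h v)

lemma trace_mul_transpose_eq {a : ℕ} (z A : Matrix (Fin a) (Fin a) ℝ) :
    (z * Aᵀ).trace = ∑ k, ∑ l, z k l * A k l := by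
  simp [Matrix.trace, Matrix.mul_apply]

lemma trace_transpose_mul_self_nonneg {a b : ℕ} (V : Matrix (Fin a) (Fin b) ℝ) :
    0 ≤ (Vᵀ * V).trace := by
  simp only [Matrix.trace, Matrix.diag_apply, Matrix.mul_apply, Matrix.transpose_apply]
  exact Finset.sum_nonneg fun k _ => Finset.sum_nonneg fun i _ => mul_self_nonneg _

lemma quad_abs_bound {a : ℕ} (D : Matrix (Fin a) (Fin a) ℝ) (w : Fin a → ℝ) :
    w ⬝ᵥ (D *ᵥ w) ≤ (∑ i, ∑ j, |D i j|) * (w ⬝ᵥ w) := by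
  have hww : ∀ i j : Fin a, |w i * w j| ≤ w ⬝ᵥ w := by
    intro i j
    have h1 : ∀ i : Fin a, w i * w i ≤ w ⬝ᵥ w := fun i =>
      Finset.single_le_sum (f := fun k => w k * w k) (fun k _ => mul_self_nonneg _)
        (Finset.mem_univ i)
    have : |w i * w j| ≤ (w i * w i + w j * w j) / 2 := by
      rw [abs_mul]
      nlinarith [sq_abs (w i), sq_abs (w j), sq_nonneg (|w i| - |w j|), abs_nonneg (w i),
        abs_nonneg (w j)]
    refine this.trans ?_
    have := h1 i; have := h1 j
    linarith
  calc w ⬝ᵥ (D *ᵥ w) = ∑ i, ∑ j, w i * (D i j * w j) := by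
        simp [dotProduct, Matrix.mulVec, dotProduct, Finset.mul_sum]
    _ ≤ ∑ i, ∑ j, |D i j| * (w ⬝ᵥ w) := by
        refine Finset.sum_le_sum fun i _ => Finset.sum_le_sum fun j _ => ?_
        calc w i * (D i j * w j) ≤ |w i * (D i j * w j)| := le_abs_self _
          _ = |D i j| * |w i * w j| := by rw [abs_mul, abs_mul, abs_mul]; ring
          _ ≤ |D i j| * (w ⬝ᵥ w) := by
              exact mul_le_mul_of_nonneg_left (hww i j) (abs_nonneg _)
    _ = (∑ i, ∑ j, |D i j|) * (w ⬝ᵥ w) := by rw [Finset.sum_mul]; congr 1; ext i; rw [Finset.sum_mul]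

/-! ### matrix convexity consequences -/

variable {d : ℕ} {K : ∀ n : ℕ, Set (Fin d → Matrix (Fin n) (Fin n) ℝ)}

lemma dsum_zero_zero {m p : ℕ} :
    dsum (0 : Matrix (Fin m) (Fin m) ℝ) (0 : Matrix (Fin p) (Fin p) ℝ) = 0 := by
  simp [dsum, Matrix.fromBlocks_zero]

theorem zero_mem (hK : IsRealMatrixConvex d K)
    (h0 : (0 : Fin d → Matrix (Fin 1) (Fin 1) ℝ) ∈ K 1) :
    ∀ m : ℕ, 0 < m → (0 : Fin d → Matrix (Fin m) (Fin m) ℝ) ∈ K m := by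
  intro m hm
  induction m with
  | zero => omega
  | succ k ih =>
    rcases Nat.eq_zero_or_pos k with hk | hk
    · subst hk; exact h0
    · have := hK.1 k 1 0 0 (ih hk) h0
      have e : (fun j => dsum ((0 : Fin d → Matrix (Fin k) (Fin k) ℝ) j)
          ((0 : Fin d → Matrix (Fin 1) (Fin 1) ℝ) j))
          = (0 : Fin d → Matrix (Fin (k+1)) (Fin (k+1)) ℝ) := by
        funext j; exact dsum_zero_zero
      rwa [e] at this

set_option maxHeartbeats 1000000 in
theorem contraction_mem (hK : IsRealMatrixConvex d K)
    (h0 : (0 : Fin d → Matrix (Fin 1) (Fin 1) ℝ) ∈ K 1)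
    {p n : ℕ} (hn : 0 < n) {y : Fin d → Matrix (Fin p) (Fin p) ℝ} (hy : y ∈ K p)
    (V : Matrix (Fin p) (Fin n) ℝ) (hV : (1 - Vᵀ * V).PosSemidef) :
    (fun j => Vᵀ * y j * V) ∈ K n := by
  classical
  obtain ⟨W, hWps, hWW⟩ := exists_sqrt_real hV
  have hWsym : Wᵀ = W := by
    have := hWps.1
    rwa [Matrix.IsHermitian, conjTranspose_eq_transpose_of_trivial] at this
  have hWW : W * W = 1 - Vᵀ * V := hWW
  have hyy : (fun j => dsum (y j) ((0 : Fin d → Matrix (Fin n) (Fin n) ℝ) j)) ∈ K (p + n) :=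
    hK.1 p n y 0 hy (zero_mem hK h0 n hn)
  set β : Matrix (Fin (p + n)) (Fin n) ℝ :=
    (Matrix.fromRows V W).submatrix finSumFinEquiv.symm id with hβ
  have hβT : βᵀ = (Matrix.fromCols Vᵀ Wᵀ).submatrix id finSumFinEquiv.symm := by
    rw [hβ, Matrix.transpose_submatrix, Matrix.transpose_fromRows]
  have hiso : βᵀ * β = 1 := by
    calc βᵀ * β
        = ((Matrix.fromCols Vᵀ Wᵀ).submatrix id ⇑finSumFinEquiv.symm) *
          ((Matrix.fromRows V W).submatrix (⇑finSumFinEquiv.symm) id) := by rw [hβT]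
      _ = (Matrix.fromCols Vᵀ Wᵀ * Matrix.fromRows V W).submatrix id id :=
          Matrix.submatrix_mul_equiv _ _ id finSumFinEquiv.symm id
      _ = 1 := by
          rw [Matrix.fromCols_mul_fromRows, hWsym, hWW, Matrix.submatrix_id_id]
          abel
  have hcomp : ∀ j, βᵀ * (dsum (y j) (0 : Matrix (Fin n) (Fin n) ℝ)) * β = Vᵀ * y j * V := by
    intro j
    calc βᵀ * (dsum (y j) (0 : Matrix (Fin n) (Fin n) ℝ)) * β
        = ((Matrix.fromCols Vᵀ Wᵀ).submatrix id ⇑finSumFinEquiv.symm) *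
          ((Matrix.fromBlocks (y j) 0 0 (0 : Matrix (Fin n) (Fin n) ℝ)).submatrix (⇑finSumFinEquiv.symm) (⇑finSumFinEquiv.symm)) *
          ((Matrix.fromRows V W).submatrix (⇑finSumFinEquiv.symm) id) := by
            rw [hβT, dsum, Matrix.reindex_apply]
      _ = ((Matrix.fromCols Vᵀ Wᵀ * Matrix.fromBlocks (y j) 0 0 (0 : Matrix (Fin n) (Fin n) ℝ)).submatrix id (⇑finSumFinEquiv.symm)) *
          ((Matrix.fromRows V W).submatrix (⇑finSumFinEquiv.symm) id) := by
            rw [Matrix.submatrix_mul_equiv (Matrix.fromCols Vᵀ Wᵀ)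
              (Matrix.fromBlocks (y j) 0 0 (0 : Matrix (Fin n) (Fin n) ℝ)) id finSumFinEquiv.symm (⇑finSumFinEquiv.symm)]
      _ = (Matrix.fromCols Vᵀ Wᵀ * Matrix.fromBlocks (y j) 0 0 (0 : Matrix (Fin n) (Fin n) ℝ) * Matrix.fromRows V W).submatrix id id :=
          Matrix.submatrix_mul_equiv _ _ id finSumFinEquiv.symm id
      _ = Vᵀ * y j * V := by
          rw [Matrix.fromCols_mul_fromBlocks, Matrix.fromCols_mul_fromRows,
            Matrix.submatrix_id_id]
          simp
  have := hK.2 (p + n) n _ β hyy hiso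
  have e : (fun j => βᵀ * (dsum (y j) ((0 : Fin d → Matrix (Fin n) (Fin n) ℝ) j)) * β)
      = fun j => Vᵀ * y j * V := by
    funext j; exact hcomp j
  rwa [e] at this

/-! ### the cone of compressions -/

/-- the cone of compressions of `K` into level `n`, paired with the compressing Gram matrix. -/
def Scone (d n : ℕ) (K : ∀ m : ℕ, Set (Fin d → Matrix (Fin m) (Fin m) ℝ)) :
    Set (Matrix (Fin n) (Fin n) ℝ × (Fin d → Matrix (Fin n) (Fin n) ℝ)) :=
  {s | ∃ (p : ℕ) (y : Fin d → Matrix (Fin p) (Fin p) ℝ) (V : Matrix (Fin p) (Fin n) ℝ),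
    y ∈ K p ∧ s.1 = Vᵀ * V ∧ s.2 = fun j => Vᵀ * y j * V}

/-- stacking computation -/
lemma stack_comp {p₁ p₂ n : ℕ} (V₁ : Matrix (Fin p₁) (Fin n) ℝ) (V₂ : Matrix (Fin p₂) (Fin n) ℝ) :
    (((Matrix.fromRows V₁ V₂).submatrix (⇑finSumFinEquiv.symm) id)ᵀ *
        ((Matrix.fromRows V₁ V₂).submatrix (⇑finSumFinEquiv.symm) id) = V₁ᵀ * V₁ + V₂ᵀ * V₂) ∧
      (∀ (Y₁ : Matrix (Fin p₁) (Fin p₁) ℝ) (Y₂ : Matrix (Fin p₂) (Fin p₂) ℝ),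
        ((Matrix.fromRows V₁ V₂).submatrix (⇑finSumFinEquiv.symm) id)ᵀ * dsum Y₁ Y₂ *
          ((Matrix.fromRows V₁ V₂).submatrix (⇑finSumFinEquiv.symm) id)
          = V₁ᵀ * Y₁ * V₁ + V₂ᵀ * Y₂ * V₂) := by
  have hT : ((Matrix.fromRows V₁ V₂).submatrix (⇑finSumFinEquiv.symm) id)ᵀ
      = (Matrix.fromCols V₁ᵀ V₂ᵀ).submatrix id ⇑finSumFinEquiv.symm := by
    rw [Matrix.transpose_submatrix, Matrix.transpose_fromRows]
  constructor
  · calc ((Matrix.fromRows V₁ V₂).submatrix (⇑finSumFinEquiv.symm) id)ᵀ *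
          ((Matrix.fromRows V₁ V₂).submatrix (⇑finSumFinEquiv.symm) id)
        = (Matrix.fromCols V₁ᵀ V₂ᵀ).submatrix id ⇑finSumFinEquiv.symm *
          ((Matrix.fromRows V₁ V₂).submatrix (⇑finSumFinEquiv.symm) id) := by rw [hT]
      _ = (Matrix.fromCols V₁ᵀ V₂ᵀ * Matrix.fromRows V₁ V₂).submatrix id id :=
          Matrix.submatrix_mul_equiv _ _ id finSumFinEquiv.symm id
      _ = V₁ᵀ * V₁ + V₂ᵀ * V₂ := by
          rw [Matrix.fromCols_mul_fromRows, Matrix.submatrix_id_id]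
  · intro Y₁ Y₂
    calc ((Matrix.fromRows V₁ V₂).submatrix (⇑finSumFinEquiv.symm) id)ᵀ * dsum Y₁ Y₂ *
          ((Matrix.fromRows V₁ V₂).submatrix (⇑finSumFinEquiv.symm) id)
        = (Matrix.fromCols V₁ᵀ V₂ᵀ).submatrix id ⇑finSumFinEquiv.symm *
          ((Matrix.fromBlocks Y₁ 0 0 Y₂).submatrix (⇑finSumFinEquiv.symm) (⇑finSumFinEquiv.symm)) *
          ((Matrix.fromRows V₁ V₂).submatrix (⇑finSumFinEquiv.symm) id) := by
            rw [hT, dsum, Matrix.reindex_apply]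
      _ = ((Matrix.fromCols V₁ᵀ V₂ᵀ * Matrix.fromBlocks Y₁ 0 0 Y₂).submatrix id (⇑finSumFinEquiv.symm)) *
          ((Matrix.fromRows V₁ V₂).submatrix (⇑finSumFinEquiv.symm) id) := by
            rw [Matrix.submatrix_mul_equiv (Matrix.fromCols V₁ᵀ V₂ᵀ)
              (Matrix.fromBlocks Y₁ 0 0 Y₂) id finSumFinEquiv.symm (⇑finSumFinEquiv.symm)]
      _ = (Matrix.fromCols V₁ᵀ V₂ᵀ * Matrix.fromBlocks Y₁ 0 0 Y₂ * Matrix.fromRows V₁ V₂).submatrix id id :=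
          Matrix.submatrix_mul_equiv _ _ id finSumFinEquiv.symm id
      _ = V₁ᵀ * Y₁ * V₁ + V₂ᵀ * Y₂ * V₂ := by
          rw [Matrix.fromCols_mul_fromBlocks, Matrix.fromCols_mul_fromRows,
            Matrix.submatrix_id_id]
          simp [Matrix.add_mul]

lemma zero_mem_Scone (n : ℕ) (h0 : (0 : Fin d → Matrix (Fin 1) (Fin 1) ℝ) ∈ K 1) :
    ((0, 0) : Matrix (Fin n) (Fin n) ℝ × (Fin d → Matrix (Fin n) (Fin n) ℝ)) ∈ Scone d n K := by
  refine ⟨1, 0, 0, h0, by simp, ?_⟩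
  funext j
  simp

lemma smul_mem_Scone {n : ℕ} {t : ℝ} (ht : 0 ≤ t) {s} (hs : s ∈ Scone d n K) :
    t • s ∈ Scone d n K := by
  obtain ⟨p, y, V, hy, h1, h2⟩ := hs
  refine ⟨p, y, Real.sqrt t • V, hy, ?_, ?_⟩
  · rw [Prod.smul_fst, h1]
    rw [Matrix.transpose_smul, Matrix.smul_mul, Matrix.mul_smul, smul_smul,
      Real.mul_self_sqrt ht]
  · rw [Prod.smul_snd, h2]
    funext j
    simp only [Pi.smul_apply]
    rw [Matrix.transpose_smul, Matrix.smul_mul, Matrix.smul_mul, Matrix.mul_smul, smul_smul,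
      Real.mul_self_sqrt ht]

lemma convex_Scone (hK : IsRealMatrixConvex d K) (n : ℕ) : Convex ℝ (Scone d n K) := by
  intro s₁ hs₁ s₂ hs₂ a b ha hb hab
  obtain ⟨p₁, y₁, V₁, hy₁, h11, h12⟩ := hs₁
  obtain ⟨p₂, y₂, V₂, hy₂, h21, h22⟩ := hs₂
  refine ⟨p₁ + p₂, (fun j => dsum (y₁ j) (y₂ j)),
    (Matrix.fromRows (Real.sqrt a • V₁) (Real.sqrt b • V₂)).submatrix (⇑finSumFinEquiv.symm) id,
    hK.1 p₁ p₂ y₁ y₂ hy₁ hy₂, ?_, ?_⟩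
  · rw [(stack_comp (Real.sqrt a • V₁) (Real.sqrt b • V₂)).1]
    simp only [Prod.fst_add, Prod.smul_fst, h11, h21]
    rw [Matrix.transpose_smul, Matrix.transpose_smul, Matrix.smul_mul, Matrix.smul_mul,
      Matrix.mul_smul, Matrix.mul_smul, smul_smul, smul_smul,
      Real.mul_self_sqrt ha, Real.mul_self_sqrt hb]
  · funext j
    rw [(stack_comp (Real.sqrt a • V₁) (Real.sqrt b • V₂)).2 (y₁ j) (y₂ j)]
    simp only [Prod.snd_add, Prod.smul_snd, h12, h22, Pi.add_apply, Pi.smul_apply]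
    rw [Matrix.transpose_smul, Matrix.transpose_smul]
    rw [Matrix.smul_mul, Matrix.smul_mul, Matrix.smul_mul, Matrix.smul_mul,
      Matrix.mul_smul, Matrix.mul_smul, smul_smul, smul_smul,
      Real.mul_self_sqrt ha, Real.mul_self_sqrt hb]

/-! ### the closure argument -/

set_option maxHeartbeats 1000000 in
lemma one_x_notin_closure (hK : IsRealMatrixConvex d K)
    (h0 : (0 : Fin d → Matrix (Fin 1) (Fin 1) ℝ) ∈ K 1)
    {n : ℕ} (hcl : IsClosed (K n)) (hn : 0 < n)
    {x : Fin d → Matrix (Fin n) (Fin n) ℝ} (hx : x ∉ K n) :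
    ((1 : Matrix (Fin n) (Fin n) ℝ), x) ∉ closure (Scone d n K) := by
  intro hmem
  rw [mem_closure_iff_seq_limit] at hmem
  obtain ⟨s, hsS, hslim⟩ := hmem
  have hP : Filter.Tendsto (fun k => (s k).1) Filter.atTop
      (nhds (1 : Matrix (Fin n) (Fin n) ℝ)) :=
    (continuous_fst.tendsto _).comp hslim
  have hz : Filter.Tendsto (fun k => (s k).2) Filter.atTop (nhds x) :=
    (continuous_snd.tendsto _).comp hslim
  set eps : ℕ → ℝ := fun k => ∑ i, ∑ j, |((s k).1 - 1) i j| with heps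
  have heps0 : ∀ k, 0 ≤ eps k := fun k =>
    Finset.sum_nonneg fun i _ => Finset.sum_nonneg fun j _ => abs_nonneg _
  have hepslim : Filter.Tendsto eps Filter.atTop (nhds 0) := by
    have hcont : Continuous (fun M : Matrix (Fin n) (Fin n) ℝ => ∑ i, ∑ j, |(M - 1) i j|) := by
      refine continuous_finset_sum _ fun i _ => continuous_finset_sum _ fun j _ => ?_
      have hentry : Continuous fun M : Matrix (Fin n) (Fin n) ℝ => (M - 1) i j := by
        simp only [Matrix.sub_apply]
        exact (continuous_id.matrix_elem i j).sub continuous_const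
      exact hentry.abs
    have := (hcont.tendsto 1).comp hP
    simp only [sub_self, Matrix.zero_apply, abs_zero, Finset.sum_const_zero] at this
    exact this
  set c : ℕ → ℝ := fun k => (1 + eps k)⁻¹ with hc
  have hcpos : ∀ k, 0 < c k := fun k => by
    rw [hc]; have := heps0 k; positivity
  have hclim : Filter.Tendsto c Filter.atTop (nhds 1) := by
    have h1 : Filter.Tendsto (fun k => 1 + eps k) Filter.atTop (nhds (1 + 0)) :=
      (tendsto_const_nhds).add hepslim
    have := h1.inv₀ (by norm_num)
    simpa using this
  have hmemK : ∀ k, c k • (s k).2 ∈ K n := by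
    intro k
    obtain ⟨p, y, V, hy, h1, h2⟩ := hsS k
    set V' := Real.sqrt (c k) • V with hV'
    have hcontr : (1 - V'ᵀ * V').PosSemidef := by
      have hVV' : V'ᵀ * V' = c k • (Vᵀ * V) := by
        rw [hV', Matrix.transpose_smul, Matrix.smul_mul, Matrix.mul_smul, smul_smul,
          Real.mul_self_sqrt (hcpos k).le]
      refine Matrix.PosSemidef.of_dotProduct_mulVec_nonneg ?_ ?_
      · rw [Matrix.IsHermitian, conjTranspose_eq_transpose_of_trivial]
        rw [Matrix.transpose_sub, Matrix.transpose_one, hVV', Matrix.transpose_smul]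
        rw [Matrix.transpose_mul, Matrix.transpose_transpose]
      · intro w
        rw [star_trivial, hVV']
        have hquad : w ⬝ᵥ ((Vᵀ * V) *ᵥ w) ≤ (1 + eps k) * (w ⬝ᵥ w) := by
          have hD := quad_abs_bound ((s k).1 - 1) w
          have hsplit : (Vᵀ * V) *ᵥ w = w + ((s k).1 - 1) *ᵥ w := by
            rw [← h1]
            rw [Matrix.sub_mulVec, Matrix.one_mulVec]
            abel
          rw [hsplit, dotProduct_add]
          have : eps k * (w ⬝ᵥ w) = (∑ i, ∑ j, |((s k).1 - 1) i j|) * (w ⬝ᵥ w) := by rw [heps]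
          rw [add_mul, one_mul]
          have := hD.trans_eq this.symm
          linarith
        have hwnn : 0 ≤ w ⬝ᵥ w := Finset.sum_nonneg fun i _ => mul_self_nonneg _
        rw [Matrix.sub_mulVec, Matrix.one_mulVec, dotProduct_sub]
        rw [Matrix.smul_mulVec, dotProduct_smul, smul_eq_mul]
        have h6 : c k * (w ⬝ᵥ ((Vᵀ * V) *ᵥ w)) ≤ c k * ((1 + eps k) * (w ⬝ᵥ w)) :=
          mul_le_mul_of_nonneg_left hquad (hcpos k).le
        have h7 : c k * (1 + eps k) = 1 := by
          rw [hc]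
          exact inv_mul_cancel₀ (by linarith [heps0 k])
        nlinarith
    have := contraction_mem hK h0 hn hy V' hcontr
    have e : (fun j => V'ᵀ * y j * V') = c k • (s k).2 := by
      funext j
      rw [h2]
      simp only [Pi.smul_apply]
      rw [hV', Matrix.transpose_smul, Matrix.smul_mul, Matrix.smul_mul, Matrix.mul_smul,
        smul_smul, Real.mul_self_sqrt (hcpos k).le]
    rwa [e] at this
  have hlim2 : Filter.Tendsto (fun k => c k • (s k).2) Filter.atTop (nhds x) := by
    have := hclim.smul hz
    simpa using this
  exact hx (hcl.mem_of_tendsto hlim2 (Filter.Eventually.of_forall hmemK))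

/-! ### linear functionals in coordinates -/

lemma lin_matrix_eval {a b : ℕ} (g : Matrix (Fin a) (Fin b) ℝ →ₗ[ℝ] ℝ)
    (P : Matrix (Fin a) (Fin b) ℝ) :
    g P = ∑ k, ∑ l, P k l * g (Matrix.single k l 1) := by
  conv_lhs => rw [Matrix.matrix_eq_sum_single P]
  rw [map_sum]
  refine Finset.sum_congr rfl fun k _ => ?_
  rw [map_sum]
  refine Finset.sum_congr rfl fun l _ => ?_
  have e : Matrix.single k l (P k l) = P k l • Matrix.single k l 1 := by
    rw [Matrix.smul_single, smul_eq_mul, mul_one]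
  rw [e, _root_.map_smul, smul_eq_mul]

lemma lin_pi_eval {a : ℕ} (g : (Fin d → Matrix (Fin a) (Fin a) ℝ) →ₗ[ℝ] ℝ)
    (z : Fin d → Matrix (Fin a) (Fin a) ℝ) :
    g z = ∑ j, ∑ k, ∑ l, z j k l * g (Pi.single j (Matrix.single k l 1)) := by
  have e : z = ∑ j, Pi.single j (z j) := (Finset.univ_sum_single z).symm
  conv_lhs => rw [e]
  rw [map_sum]
  refine Finset.sum_congr rfl fun j _ => ?_
  have := lin_matrix_eval (g.comp (LinearMap.single ℝ (fun _ : Fin d => Matrix (Fin a) (Fin a) ℝ) j)) (z j)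
  simpa using this

end Bipolar

open Bipolar

attribute [local instance] Matrix.normedAddCommGroup Matrix.normedSpace

set_option maxHeartbeats 2000000 in
theorem stmt_10 (d : ℕ) (hd : 1 ≤ d)
    (K : ∀ n : ℕ, Set (Fin d → Matrix (Fin n) (Fin n) ℝ))
    (hK : IsRealMatrixConvex d K) (hclosed : ∀ n, IsClosed (K n))
    (h0 : (0 : Fin d → Matrix (Fin 1) (Fin 1) ℝ) ∈ K 1) (n : ℕ) :
    {x : Fin d → Matrix (Fin n) (Fin n) ℝ |
        ∀ (m : ℕ) (A : Fin d → Matrix (Fin m) (Fin m) ℝ), A ∈ matPolar d K m →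
          loewnerLE (reSym (pairing x A)) 1} = K n := by
  classical
  ext x
  simp only [Set.mem_setOf_eq]
  constructor
  · intro hx
    rcases Nat.eq_zero_or_pos n with hn | hn
    · subst hn
      have hiso : (0 : Matrix (Fin 1) (Fin 0) ℝ)ᵀ * (0 : Matrix (Fin 1) (Fin 0) ℝ) = 1 := by
        ext i j
        exact i.elim0
      have h := hK.2 1 0 (0 : Fin d → Matrix (Fin 1) (Fin 1) ℝ)
        (0 : Matrix (Fin 1) (Fin 0) ℝ) h0 hiso
      have e : x = fun j => (0 : Matrix (Fin 1) (Fin 0) ℝ)ᵀ *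
          (0 : Fin d → Matrix (Fin 1) (Fin 1) ℝ) j * (0 : Matrix (Fin 1) (Fin 0) ℝ) := by
        funext j
        ext i k
        exact i.elim0
      rw [e]
      exact h
    · by_contra hxK
      have hnotin := one_x_notin_closure hK h0 (hclosed n) hn hxK
      obtain ⟨f, u, hfS, hfx⟩ := geometric_hahn_banach_closed_point
        ((convex_Scone hK n).closure) isClosed_closure hnotin
      have hu : 0 < u := by
        have h := hfS (0, 0) (subset_closure (zero_mem_Scone n h0))
        have h00 : ((0, 0) : Matrix (Fin n) (Fin n) ℝ × (Fin d → Matrix (Fin n) (Fin n) ℝ))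
            = 0 := rfl
        rw [h00, map_zero] at h
        exact h
      have hfle : ∀ s ∈ Scone d n K, f s ≤ 0 := by
        intro s hs
        by_contra hpos
        push_neg at hpos
        have h2 := hfS ((u / f s) • s)
          (subset_closure (smul_mem_Scone (le_of_lt (div_pos hu hpos)) hs))
        rw [_root_.map_smul, smul_eq_mul, div_mul_cancel₀ _ (ne_of_gt hpos)] at h2
        exact lt_irrefl u h2
      set M₀ : Matrix (Fin n) (Fin n) ℝ :=
        Matrix.of (fun k l => f (Matrix.single k l 1, 0)) with hM₀
      set AA : Fin d → Matrix (Fin n) (Fin n) ℝ :=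
        fun j => Matrix.of (fun k l => f (0, Pi.single j (Matrix.single k l 1))) with hAA
      have hfeval : ∀ (P : Matrix (Fin n) (Fin n) ℝ) (z : Fin d → Matrix (Fin n) (Fin n) ℝ),
          f (P, z) = (∑ k, ∑ l, P k l * M₀ k l) + ∑ j, ∑ k, ∑ l, z j k l * AA j k l := by
        intro P z
        have hsplit : ((P, z) : Matrix (Fin n) (Fin n) ℝ × (Fin d → Matrix (Fin n) (Fin n) ℝ))
            = (P, (0 : Fin d → Matrix (Fin n) (Fin n) ℝ))
              + ((0 : Matrix (Fin n) (Fin n) ℝ), z) := by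
          simp [Prod.ext_iff]
        rw [hsplit, map_add]
        congr 1
        · have h1 := lin_matrix_eval (f.toLinearMap.comp
            (LinearMap.inl ℝ (Matrix (Fin n) (Fin n) ℝ) (Fin d → Matrix (Fin n) (Fin n) ℝ))) P
          simp only [LinearMap.coe_comp, Function.comp_apply, LinearMap.inl_apply,
            ContinuousLinearMap.coe_coe] at h1
          rw [h1]
          refine Finset.sum_congr rfl fun k _ => Finset.sum_congr rfl fun l _ => ?_
          rw [hM₀]
          simp
        · have h1 := lin_pi_eval (f.toLinearMap.comp
            (LinearMap.inr ℝ (Matrix (Fin n) (Fin n) ℝ) (Fin d → Matrix (Fin n) (Fin n) ℝ))) z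
          simp only [LinearMap.coe_comp, Function.comp_apply, LinearMap.inr_apply,
            ContinuousLinearMap.coe_coe] at h1
          rw [h1]
          refine Finset.sum_congr rfl fun j _ => Finset.sum_congr rfl fun k _ =>
            Finset.sum_congr rfl fun l _ => ?_
          rw [hAA]
          simp
      have hmaster : ∀ (p : ℕ) (y : Fin d → Matrix (Fin p) (Fin p) ℝ), y ∈ K p →
          ∀ V : Matrix (Fin p) (Fin n) ℝ,
          (∑ j, (Vᵀ * y j * V * (AA j)ᵀ).trace) + ∑ k, ∑ l, (Vᵀ * V) k l * M₀ k l ≤ 0 := by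
        intro p y hy V
        have hs : ((Vᵀ * V, fun j => Vᵀ * y j * V) :
            Matrix (Fin n) (Fin n) ℝ × (Fin d → Matrix (Fin n) (Fin n) ℝ)) ∈ Scone d n K :=
          ⟨p, y, V, hy, rfl, rfl⟩
        have h := hfle _ hs
        rw [hfeval] at h
        have e : ∀ j, ∑ k, ∑ l, (Vᵀ * y j * V) k l * AA j k l
            = (Vᵀ * y j * V * (AA j)ᵀ).trace := fun j => (trace_mul_transpose_eq _ _).symm
        calc (∑ j, (Vᵀ * y j * V * (AA j)ᵀ).trace) + ∑ k, ∑ l, (Vᵀ * V) k l * M₀ k l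
            = (∑ k, ∑ l, (Vᵀ * V) k l * M₀ k l)
              + ∑ j, ∑ k, ∑ l, (Vᵀ * y j * V) k l * AA j k l := by
              rw [Finset.sum_congr rfl fun j _ => e j]; ring
          _ ≤ 0 := h
      set C₀ : Matrix (Fin n) (Fin n) ℝ := -((2 : ℝ)⁻¹ • (M₀ + M₀ᵀ)) with hC₀
      have hC₀sym : C₀ᵀ = C₀ := by
        rw [hC₀]
        rw [Matrix.transpose_neg, Matrix.transpose_smul, Matrix.transpose_add,
          Matrix.transpose_transpose, add_comm]
      have hpairC₀ : ∀ P : Matrix (Fin n) (Fin n) ℝ, Pᵀ = P →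
          ∑ k, ∑ l, P k l * C₀ k l = -∑ k, ∑ l, P k l * M₀ k l := by
        intro P hP
        have hswap : ∑ k, ∑ l, P k l * M₀ l k = ∑ k, ∑ l, P k l * M₀ k l := by
          rw [Finset.sum_comm]
          refine Finset.sum_congr rfl fun k _ => Finset.sum_congr rfl fun l _ => ?_
          have hsym : P l k = P k l := by
            conv_lhs => rw [← hP]
            simp
          rw [hsym]
        have expand : ∀ k l, P k l * C₀ k l
            = -((2 : ℝ)⁻¹ * (P k l * M₀ k l) + (2 : ℝ)⁻¹ * (P k l * M₀ l k)) := by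
          intro k l
          rw [hC₀]
          simp [Matrix.neg_apply, Matrix.smul_apply, Matrix.add_apply, Matrix.transpose_apply,
            smul_eq_mul]
          ring
        calc ∑ k, ∑ l, P k l * C₀ k l
            = ∑ k, ∑ l, -((2 : ℝ)⁻¹ * (P k l * M₀ k l) + (2 : ℝ)⁻¹ * (P k l * M₀ l k)) :=
              Finset.sum_congr rfl fun k _ => Finset.sum_congr rfl fun l _ => expand k l
          _ = -((2 : ℝ)⁻¹ * (∑ k, ∑ l, P k l * M₀ k l)
              + (2 : ℝ)⁻¹ * (∑ k, ∑ l, P k l * M₀ l k)) := by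
              rw [Finset.mul_sum, Finset.mul_sum, ← Finset.sum_add_distrib, ← Finset.sum_neg_distrib]
              refine Finset.sum_congr rfl fun k _ => ?_
              rw [Finset.mul_sum, Finset.mul_sum, ← Finset.sum_add_distrib, ← Finset.sum_neg_distrib]
          _ = -∑ k, ∑ l, P k l * M₀ k l := by rw [hswap]; ring
      have hpair : ∀ {b : ℕ} (V : Matrix (Fin b) (Fin n) ℝ),
          (Vᵀ * V * C₀).trace = -∑ k, ∑ l, (Vᵀ * V) k l * M₀ k l := by
        intro b V
        have h1 : (Vᵀ * V * C₀).trace = ∑ k, ∑ l, (Vᵀ * V) k l * C₀ k l := by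
          conv_lhs => rw [← hC₀sym]
          exact trace_mul_transpose_eq _ _
        rw [h1]
        refine hpairC₀ _ ?_
        rw [Matrix.transpose_mul, Matrix.transpose_transpose]
      have hC₀psd : C₀.PosSemidef := by
        refine Matrix.PosSemidef.of_dotProduct_mulVec_nonneg ?_ ?_
        · rw [Matrix.IsHermitian, conjTranspose_eq_transpose_of_trivial, hC₀sym]
        · intro w
          rw [star_trivial]
          set V : Matrix (Fin n) (Fin n) ℝ :=
            Matrix.of (fun i k => if i = (⟨0, hn⟩ : Fin n) then w k else 0) with hV
          have hVV : Vᵀ * V = Matrix.of (fun k l => w k * w l) := by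
            ext k l
            simp only [Matrix.mul_apply, Matrix.transpose_apply, hV, Matrix.of_apply]
            rw [Finset.sum_eq_single (⟨0, hn⟩ : Fin n)]
            · simp
            · intro i _ hi
              simp [hi]
            · intro h
              exact absurd (Finset.mem_univ _) h
          have hm := hmaster n 0 (zero_mem hK h0 n hn) V
          have hzero : (∑ j, (Vᵀ * (0 : Fin d → Matrix (Fin n) (Fin n) ℝ) j * V
              * (AA j)ᵀ).trace) = 0 := by
            simp
          rw [hzero, zero_add] at hm
          have hquad : w ⬝ᵥ (C₀ *ᵥ w) = ∑ k, ∑ l, (Vᵀ * V) k l * C₀ k l := by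
            rw [hVV]
            simp only [dotProduct, Matrix.mulVec, dotProduct, Matrix.of_apply, Finset.mul_sum]
            refine Finset.sum_congr rfl fun k _ => Finset.sum_congr rfl fun l _ => ?_
            ring
          rw [hquad, hpairC₀ _ (by rw [Matrix.transpose_mul, Matrix.transpose_transpose])]
          linarith
      set ε : ℝ := u / (2 * (n : ℝ)) with hε
      have hnR : (0 : ℝ) < (n : ℝ) := by exact_mod_cast hn
      have hεpos : 0 < ε := by
        rw [hε]
        positivity
      set C : Matrix (Fin n) (Fin n) ℝ := C₀ + ε • 1 with hC
      have hCsym : Cᵀ = C := by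
        rw [hC, Matrix.transpose_add, hC₀sym, Matrix.transpose_smul, Matrix.transpose_one]
      have hCpd : C.PosDef := by
        refine Matrix.PosDef.of_dotProduct_mulVec_pos ?_ ?_
        · rw [Matrix.IsHermitian, conjTranspose_eq_transpose_of_trivial, hCsym]
        · intro w hw
          rw [star_trivial, hC]
          rw [Matrix.add_mulVec, dotProduct_add, Matrix.smul_mulVec,
            Matrix.one_mulVec, dotProduct_smul, smul_eq_mul]
          have h1 := hC₀psd.dotProduct_mulVec_nonneg w
          rw [star_trivial] at h1
          have h2 : 0 < w ⬝ᵥ w := by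
            rcases (dotProduct_self_eq_zero (v := w)).not.mpr hw with h
            have hnn : 0 ≤ w ⬝ᵥ w := Finset.sum_nonneg fun i _ => mul_self_nonneg _
            exact lt_of_le_of_ne hnn (Ne.symm h)
          nlinarith
      have hdetC : IsUnit C.det := hCpd.det_pos.ne'.isUnit
      obtain ⟨R, hRps, hRR⟩ := exists_sqrt_real hCpd.posSemidef
      have hRsym : Rᵀ = R := by
        have := hRps.1
        rwa [Matrix.IsHermitian, conjTranspose_eq_transpose_of_trivial] at this
      have hRR : R * R = C := hRR
      have hdetR : IsUnit R.det := by
        have : IsUnit (R.det * R.det) := by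
          rw [← Matrix.det_mul, hRR]
          exact hdetC
        exact isUnit_of_mul_isUnit_left this
      set Ri : Matrix (Fin n) (Fin n) ℝ := R⁻¹ with hRi
      have hRRi : R * Ri = 1 := Matrix.mul_nonsing_inv R hdetR
      have hRiR : Ri * R = 1 := Matrix.nonsing_inv_mul R hdetR
      have hRisym : Riᵀ = Ri := by
        rw [hRi, Matrix.transpose_nonsing_inv, hRsym]
      set A' : Fin d → Matrix (Fin n) (Fin n) ℝ := fun j => Ri * AA j * Ri with hA'
      have key_trace : ∀ (b : ℕ) (V0 : Matrix (Fin b) (Fin n) ℝ)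
          (Y : Matrix (Fin b) (Fin b) ℝ) (j : Fin d),
          (V0ᵀ * Y * V0 * (A' j)ᵀ).trace = ((V0 * Ri)ᵀ * Y * (V0 * Ri) * (AA j)ᵀ).trace := by
        intro b V0 Y j
        have h1 : (A' j)ᵀ = Ri * (AA j)ᵀ * Ri := by
          rw [hA']
          rw [Matrix.transpose_mul, Matrix.transpose_mul, hRisym, Matrix.mul_assoc]
        have h2 : (V0 * Ri)ᵀ = Ri * V0ᵀ := by rw [Matrix.transpose_mul, hRisym]
        rw [h1, h2]
        have h3 : V0ᵀ * Y * V0 * (Ri * (AA j)ᵀ * Ri)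
            = (V0ᵀ * Y * V0 * Ri) * (AA j)ᵀ * Ri := by
          simp [Matrix.mul_assoc]
        rw [h3, Matrix.trace_mul_cycle]
        congr 1
        simp [Matrix.mul_assoc]
      have hpolar : A' ∈ matPolar d K n := by
        intro p y hy
        rw [loewner_iff]
        intro v
        rw [quad_pairing, dot_self_eq]
        set V0 : Matrix (Fin p) (Fin n) ℝ := matify v with hV0
        set V : Matrix (Fin p) (Fin n) ℝ := V0 * Ri with hVdef
        have e1 : ∑ j, (V0ᵀ * y j * V0 * (A' j)ᵀ).trace
            = ∑ j, (Vᵀ * y j * V * (AA j)ᵀ).trace :=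
          Finset.sum_congr rfl fun j _ => key_trace p V0 (y j) j
        rw [e1]
        have hm := hmaster p y hy V
        have hchain1 : ∑ j, (Vᵀ * y j * V * (AA j)ᵀ).trace ≤ (Vᵀ * V * C₀).trace := by
          rw [hpair V]
          linarith
        have hchain2 : (Vᵀ * V * C₀).trace ≤ (Vᵀ * V * C).trace := by
          have hsub : Vᵀ * V * C = Vᵀ * V * C₀ + ε • (Vᵀ * V) := by
            rw [hC, Matrix.mul_add, Matrix.mul_smul, Matrix.mul_one]
          have htr : (Vᵀ * V * C).trace = (Vᵀ * V * C₀).trace + ε * (Vᵀ * V).trace := by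
            rw [hsub, Matrix.trace_add, Matrix.trace_smul, smul_eq_mul]
          have hnn : 0 ≤ ε * (Vᵀ * V).trace :=
            mul_nonneg hεpos.le (trace_transpose_mul_self_nonneg V)
          linarith
        have hchain3 : (Vᵀ * V * C).trace = (V0ᵀ * V0).trace := by
          have hVVC : Vᵀ * V * C = Ri * (V0ᵀ * V0) * R := by
            calc Vᵀ * V * C = Ri * V0ᵀ * V0 * (Ri * R) * R := by
                  rw [hVdef, Matrix.transpose_mul, hRisym, ← hRR]
                  simp [Matrix.mul_assoc]
              _ = Ri * (V0ᵀ * V0) * R := by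
                  rw [hRiR, Matrix.mul_one]
                  simp [Matrix.mul_assoc]
          rw [hVVC, Matrix.trace_mul_cycle, ← Matrix.mul_assoc, hRRi, Matrix.one_mul]
        linarith
      have hle := hx n A' hpolar
      rw [loewner_iff] at hle
      have hv := hle (fun ik => R ik.1 ik.2)
      rw [quad_pairing, dot_self_eq] at hv
      have hmat : matify (fun ik : Fin n × Fin n => R ik.1 ik.2) = R := rfl
      rw [hmat] at hv
      have e2 : ∑ j, (Rᵀ * x j * R * (A' j)ᵀ).trace = ∑ j, (x j * (AA j)ᵀ).trace := by
        refine Finset.sum_congr rfl fun j _ => ?_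
        rw [key_trace n R (x j) j, hRRi]
        simp
      rw [e2] at hv
      have e3 : (Rᵀ * R).trace = C.trace := by rw [hRsym, hRR]
      rw [e3] at hv
      -- now derive the contradiction from hfx
      have hone : ∑ k, ∑ l, (1 : Matrix (Fin n) (Fin n) ℝ) k l * M₀ k l = M₀.trace := by
        simp only [Matrix.one_apply, ite_mul, one_mul, zero_mul, Matrix.trace, Matrix.diag_apply]
        refine Finset.sum_congr rfl fun k _ => ?_
        rw [Finset.sum_ite_eq (Finset.univ) k (fun l => M₀ k l)]
        simp
      have hf1x : f (1, x) = M₀.trace + ∑ j, (x j * (AA j)ᵀ).trace := by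
        rw [hfeval, hone]
        have e4 : ∑ j, ∑ k, ∑ l, x j k l * AA j k l = ∑ j, (x j * (AA j)ᵀ).trace :=
          Finset.sum_congr rfl fun j _ => (trace_mul_transpose_eq _ _).symm
        rw [e4]
      have htrC₀ : C₀.trace = -M₀.trace := by
        rw [hC₀]
        rw [Matrix.trace_neg, Matrix.trace_smul, Matrix.trace_add, Matrix.trace_transpose,
          smul_eq_mul]
        try ring
      have htrC : C.trace = C₀.trace + ε * (n : ℝ) := by
        rw [hC, Matrix.trace_add, Matrix.trace_smul, Matrix.trace_one, smul_eq_mul]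
        simp
      have hεn : ε * (n : ℝ) = u / 2 := by
        rw [hε]
        field_simp
      rw [hf1x] at hfx
      -- hv : ∑ j, (x j * (AA j)ᵀ).trace ≤ C.trace
      -- hfx : u < M₀.trace + ∑ j ...
      -- C.trace = -M₀.trace + u/2
      linarith
  · intro hx m A hA
    exact hA n x hx
end

section
/- Fix d ≥ 1 and let K be a real matrix convex set over ℝ^d, with complexification K_c. Then: (a) K_c is a complex matrix convex set over ℂ^d; (b) for every x ∈ K_n one has x + i·0 ∈ (K_c)_n, and conversely a real tuple x with x + i·0 ∈ (K_c)_n satisfies x ∈ K_n; (c) z ∈ (K_c)_n if and only if the entrywise conjugate tuple z̄ ∈ (K_c)_n; (d) if z ∈ (K_c)_n then the tuple of entrywise real parts (Re z_1, …, Re z_d) lies in K_n; (e) every K_n is closed if and only if every (K_c)_n is closed, and every K_n is compact if and only if every (K_c)_n is compact. -/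
open Matrix
open scoped Kronecker

/-- A complex matrix convex set over `ℂ^d`. -/
def IsComplexMatrixConvex (d : ℕ) (L : ∀ n : ℕ, Set (Fin d → Matrix (Fin n) (Fin n) ℂ)) : Prop :=
  (∀ (m p : ℕ) (x : Fin d → Matrix (Fin m) (Fin m) ℂ) (y : Fin d → Matrix (Fin p) (Fin p) ℂ),
    x ∈ L m → y ∈ L p → (fun j => dsum (x j) (y j)) ∈ L (m + p)) ∧
  (∀ (m p : ℕ) (x : Fin d → Matrix (Fin m) (Fin m) ℂ) (β : Matrix (Fin m) (Fin p) ℂ),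
    x ∈ L m → βᴴ * β = 1 → (fun j => βᴴ * x j * β) ∈ L p)

/-- The canonical map `c : M_{k,m}(ℂ) → M_{2k,2m}(ℝ)` sending `Z = X + iY` to the real
block matrix `[[X, -Y], [Y, X]]` (indices reindexed to `Fin (k+k)` and `Fin (m+m)`). -/
noncomputable def cmat {k m : ℕ} (Z : Matrix (Fin k) (Fin m) ℂ) :
    Matrix (Fin (k + k)) (Fin (m + m)) ℝ :=
  Matrix.reindex finSumFinEquiv finSumFinEquiv
    (Matrix.fromBlocks (Z.map Complex.re) (-(Z.map Complex.im))
      (Z.map Complex.im) (Z.map Complex.re))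

/-- The complexification of a graded family `K`: at level `n`, the complex tuples `z` with
`(c(z_1), …, c(z_d)) ∈ K_{2n}`. -/
noncomputable def cplxify (d : ℕ) (K : ∀ n : ℕ, Set (Fin d → Matrix (Fin n) (Fin n) ℝ))
    (n : ℕ) : Set (Fin d → Matrix (Fin n) (Fin n) ℂ) :=
  {z | (fun j => cmat (z j)) ∈ K (n + n)}

section Aux

/-! ### Auxiliary lemmas -/

/-- The isometry matrix coming from an injective map `f : Fin p → Fin m`. -/
def embMat {m p : ℕ} (f : Fin p → Fin m) : Matrix (Fin m) (Fin p) ℝ :=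
  Matrix.of fun i j => if i = f j then 1 else 0

lemma embMat_isometry {m p : ℕ} {f : Fin p → Fin m} (hf : Function.Injective f) :
    (embMat f)ᵀ * embMat f = 1 := by
  ext i j
  simp [Matrix.mul_apply, embMat, Matrix.one_apply, ite_and, hf.eq_iff, eq_comm]

lemma embMat_compress {m p : ℕ} (f : Fin p → Fin m) (x : Matrix (Fin m) (Fin m) ℝ) :
    (embMat f)ᵀ * x * embMat f = x.submatrix f f := by
  ext i j
  simp [Matrix.mul_apply, embMat, Finset.sum_mul, ite_mul, mul_ite]

lemma compress_mem {d : ℕ} {K : ∀ n : ℕ, Set (Fin d → Matrix (Fin n) (Fin n) ℝ)}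
    (hK : IsRealMatrixConvex d K) {m p : ℕ} {f : Fin p → Fin m} (hf : Function.Injective f)
    {x : Fin d → Matrix (Fin m) (Fin m) ℝ} (hx : x ∈ K m) :
    (fun j => (x j).submatrix f f) ∈ K p := by
  have h := hK.2 m p x (embMat f) hx (embMat_isometry hf)
  simpa only [embMat_compress] using h

lemma map_re_mul {k m l : ℕ} (Z : Matrix (Fin k) (Fin m) ℂ) (W : Matrix (Fin m) (Fin l) ℂ) :
    (Z * W).map Complex.re
      = Z.map Complex.re * W.map Complex.re - Z.map Complex.im * W.map Complex.im := by
  ext i j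
  simp [Matrix.mul_apply, Complex.mul_re, Finset.sum_sub_distrib]

lemma map_im_mul {k m l : ℕ} (Z : Matrix (Fin k) (Fin m) ℂ) (W : Matrix (Fin m) (Fin l) ℂ) :
    (Z * W).map Complex.im
      = Z.map Complex.re * W.map Complex.im + Z.map Complex.im * W.map Complex.re := by
  ext i j
  simp [Matrix.mul_apply, Complex.mul_im, Finset.sum_add_distrib]

lemma cmat_mul {k m l : ℕ} (Z : Matrix (Fin k) (Fin m) ℂ) (W : Matrix (Fin m) (Fin l) ℂ) :
    cmat (Z * W) = cmat Z * cmat W := by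
  unfold cmat
  simp only [Matrix.reindex_apply]
  rw [Matrix.submatrix_mul_equiv _ _ _ finSumFinEquiv.symm _]
  congr 1
  rw [Matrix.fromBlocks_multiply, map_re_mul, map_im_mul]
  congr 1 <;> simp -failIfUnchanged [Matrix.neg_mul, Matrix.mul_neg, sub_eq_add_neg] <;> abel

lemma cmat_conjTranspose {k m : ℕ} (Z : Matrix (Fin k) (Fin m) ℂ) :
    cmat Zᴴ = (cmat Z)ᵀ := by
  unfold cmat
  simp only [Matrix.reindex_apply, Matrix.transpose_submatrix, Matrix.fromBlocks_transpose]
  have h1 : (Zᴴ).map Complex.re = (Z.map Complex.re)ᵀ := by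
    ext i j; simp [Matrix.conjTranspose_apply]
  have h2 : (Zᴴ).map Complex.im = -(Z.map Complex.im)ᵀ := by
    ext i j; simp [Matrix.conjTranspose_apply]
  rw [h1, h2]; simp

lemma cmat_one {m : ℕ} : cmat (1 : Matrix (Fin m) (Fin m) ℂ) = 1 := by
  unfold cmat
  have h1 : (1 : Matrix (Fin m) (Fin m) ℂ).map Complex.re = 1 := by
    ext i j; simp [Matrix.one_apply]; split <;> simp
  have h2 : (1 : Matrix (Fin m) (Fin m) ℂ).map Complex.im = 0 := by
    ext i j; simp [Matrix.one_apply]; split <;> simp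
  rw [h1, h2]
  simp [Matrix.fromBlocks_one]

lemma map_re_ofReal {n m : ℕ} (x : Matrix (Fin n) (Fin m) ℝ) :
    (x.map Complex.ofReal).map Complex.re = x := by ext i j; simp

lemma map_im_ofReal {n m : ℕ} (x : Matrix (Fin n) (Fin m) ℝ) :
    (x.map Complex.ofReal).map Complex.im = 0 := by ext i j; simp

lemma cmat_map_ofReal {n : ℕ} (x : Matrix (Fin n) (Fin n) ℝ) :
    cmat (x.map Complex.ofReal) = dsum x x := by
  unfold cmat dsum
  rw [map_re_ofReal, map_im_ofReal, neg_zero]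

lemma symm_addNat {m : ℕ} (b : Fin m) :
    (finSumFinEquiv.symm (Fin.addNat b m) : Fin m ⊕ Fin m) = Sum.inr b := by
  rw [← Fin.natAdd_eq_addNat]; exact finSumFinEquiv_symm_apply_natAdd b

lemma sssc_ll {α β γ δ : Type*} (a : α) :
    (Equiv.sumSumSumComm α β γ δ) (Sum.inl (Sum.inl a)) = Sum.inl (Sum.inl a) := rfl
lemma sssc_lr {α β γ δ : Type*} (b : β) :
    (Equiv.sumSumSumComm α β γ δ) (Sum.inl (Sum.inr b)) = Sum.inr (Sum.inl b) := rfl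
lemma sssc_rl {α β γ δ : Type*} (c : γ) :
    (Equiv.sumSumSumComm α β γ δ) (Sum.inr (Sum.inl c)) = Sum.inl (Sum.inr c) := rfl
lemma sssc_rr {α β γ δ : Type*} (e : δ) :
    (Equiv.sumSumSumComm α β γ δ) (Sum.inr (Sum.inr e)) = Sum.inr (Sum.inr e) := rfl

section entries
variable {k m p : ℕ}

lemma cmat_ll (Z : Matrix (Fin k) (Fin m) ℂ) (a : Fin k) (b : Fin m) :
    cmat Z (finSumFinEquiv (Sum.inl a)) (finSumFinEquiv (Sum.inl b)) = (Z a b).re := by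
  simp [cmat, symm_addNat]
lemma cmat_lr (Z : Matrix (Fin k) (Fin m) ℂ) (a : Fin k) (b : Fin m) :
    cmat Z (finSumFinEquiv (Sum.inl a)) (finSumFinEquiv (Sum.inr b)) = -(Z a b).im := by
  simp [cmat, symm_addNat]
lemma cmat_rl (Z : Matrix (Fin k) (Fin m) ℂ) (a : Fin k) (b : Fin m) :
    cmat Z (finSumFinEquiv (Sum.inr a)) (finSumFinEquiv (Sum.inl b)) = (Z a b).im := by
  simp [cmat, symm_addNat]
lemma cmat_rr (Z : Matrix (Fin k) (Fin m) ℂ) (a : Fin k) (b : Fin m) :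
    cmat Z (finSumFinEquiv (Sum.inr a)) (finSumFinEquiv (Sum.inr b)) = (Z a b).re := by
  simp [cmat, symm_addNat]

variable {α : Type*} [Zero α]
lemma dsum_ll (A : Matrix (Fin m) (Fin m) α) (B : Matrix (Fin p) (Fin p) α) (a b : Fin m) :
    dsum A B (finSumFinEquiv (Sum.inl a)) (finSumFinEquiv (Sum.inl b)) = A a b := by
  simp [dsum, symm_addNat]
lemma dsum_lr (A : Matrix (Fin m) (Fin m) α) (B : Matrix (Fin p) (Fin p) α) (a : Fin m) (b : Fin p) :
    dsum A B (finSumFinEquiv (Sum.inl a)) (finSumFinEquiv (Sum.inr b)) = 0 := by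
  simp [dsum, symm_addNat]
lemma dsum_rl (A : Matrix (Fin m) (Fin m) α) (B : Matrix (Fin p) (Fin p) α) (a : Fin p) (b : Fin m) :
    dsum A B (finSumFinEquiv (Sum.inr a)) (finSumFinEquiv (Sum.inl b)) = 0 := by
  simp [dsum, symm_addNat]
lemma dsum_rr (A : Matrix (Fin m) (Fin m) α) (B : Matrix (Fin p) (Fin p) α) (a b : Fin p) :
    dsum A B (finSumFinEquiv (Sum.inr a)) (finSumFinEquiv (Sum.inr b)) = B a b := by
  simp [dsum, symm_addNat]
end entries

/-- The permutation identifying `Fin ((m+p)+(m+p))` with `Fin ((m+m)+(p+p))`. -/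
def shuffle (m p : ℕ) : Fin ((m + p) + (m + p)) ≃ Fin ((m + m) + (p + p)) :=
  (finSumFinEquiv.symm.trans (finSumFinEquiv.symm.sumCongr finSumFinEquiv.symm)).trans
    ((Equiv.sumSumSumComm (Fin m) (Fin p) (Fin m) (Fin p)).trans
      ((finSumFinEquiv.sumCongr finSumFinEquiv).trans finSumFinEquiv))

lemma shuffle_ll {m p : ℕ} (a : Fin m) :
    shuffle m p (finSumFinEquiv (Sum.inl (finSumFinEquiv (Sum.inl a))))
      = finSumFinEquiv (Sum.inl (finSumFinEquiv (Sum.inl a))) := by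
  simp only [shuffle, Equiv.trans_apply, Equiv.symm_apply_apply, Equiv.sumCongr_apply,
    Sum.map_inl, Sum.map_inr, sssc_ll]
lemma shuffle_lr {m p : ℕ} (a : Fin p) :
    shuffle m p (finSumFinEquiv (Sum.inl (finSumFinEquiv (Sum.inr a))))
      = finSumFinEquiv (Sum.inr (finSumFinEquiv (Sum.inl a))) := by
  simp only [shuffle, Equiv.trans_apply, Equiv.symm_apply_apply, Equiv.sumCongr_apply,
    Sum.map_inl, Sum.map_inr, sssc_lr]
lemma shuffle_rl {m p : ℕ} (a : Fin m) :
    shuffle m p (finSumFinEquiv (Sum.inr (finSumFinEquiv (Sum.inl a))))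
      = finSumFinEquiv (Sum.inl (finSumFinEquiv (Sum.inr a))) := by
  simp only [shuffle, Equiv.trans_apply, Equiv.symm_apply_apply, Equiv.sumCongr_apply,
    Sum.map_inl, Sum.map_inr, sssc_rl]
lemma shuffle_rr {m p : ℕ} (a : Fin p) :
    shuffle m p (finSumFinEquiv (Sum.inr (finSumFinEquiv (Sum.inr a))))
      = finSumFinEquiv (Sum.inr (finSumFinEquiv (Sum.inr a))) := by
  simp only [shuffle, Equiv.trans_apply, Equiv.symm_apply_apply, Equiv.sumCongr_apply,
    Sum.map_inl, Sum.map_inr, sssc_rr]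

lemma cmat_dsum {m p : ℕ} (A : Matrix (Fin m) (Fin m) ℂ) (B : Matrix (Fin p) (Fin p) ℂ) :
    cmat (dsum A B) = (dsum (cmat A) (cmat B)).submatrix (shuffle m p) (shuffle m p) := by
  ext i j
  obtain ⟨si, rfl⟩ := finSumFinEquiv.surjective i
  obtain ⟨sj, rfl⟩ := finSumFinEquiv.surjective j
  rcases si with a | a <;> rcases sj with b | b <;>
    · obtain ⟨sa, rfl⟩ := finSumFinEquiv.surjective a
      obtain ⟨sb, rfl⟩ := finSumFinEquiv.surjective b
      rcases sa with a | a <;> rcases sb with b | b <;>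
        simp only [Matrix.submatrix_apply, shuffle_ll, shuffle_lr, shuffle_rl, shuffle_rr,
          cmat_ll, cmat_lr, cmat_rl, cmat_rr, dsum_ll, dsum_lr, dsum_rl, dsum_rr,
          Matrix.zero_apply, Complex.zero_re, Complex.zero_im, neg_zero]

/-- The signature matrix `J = diag(1, -1)` implementing complex conjugation. -/
noncomputable def Jmat (n : ℕ) : Matrix (Fin (n + n)) (Fin (n + n)) ℝ :=
  dsum (1 : Matrix (Fin n) (Fin n) ℝ) (-1)

lemma Jmat_transpose (n : ℕ) : (Jmat n)ᵀ = Jmat n := by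
  unfold Jmat dsum
  simp only [Matrix.reindex_apply, Matrix.transpose_submatrix, Matrix.fromBlocks_transpose]
  simp

lemma Jmat_mul_Jmat (n : ℕ) : Jmat n * Jmat n = 1 := by
  unfold Jmat dsum
  simp only [Matrix.reindex_apply]
  rw [Matrix.submatrix_mul_equiv _ _ _ finSumFinEquiv.symm _, Matrix.fromBlocks_multiply]
  simp [Matrix.fromBlocks_one]

lemma cmat_conj {k m : ℕ} (Z : Matrix (Fin k) (Fin m) ℂ) :
    cmat (Z.map (starRingEnd ℂ)) = Jmat k * cmat Z * Jmat m := by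
  have hre : (Z.map (starRingEnd ℂ)).map Complex.re = Z.map Complex.re := by
    ext i j; simp
  have him : (Z.map (starRingEnd ℂ)).map Complex.im = -(Z.map Complex.im) := by
    ext i j; simp
  unfold cmat Jmat dsum
  simp only [Matrix.reindex_apply]
  rw [Matrix.submatrix_mul_equiv _ _ _ finSumFinEquiv.symm _,
    Matrix.submatrix_mul_equiv _ _ _ finSumFinEquiv.symm _,
    Matrix.fromBlocks_multiply, Matrix.fromBlocks_multiply, hre, him]
  congr 1 <;> simp

lemma continuous_cmat {k m : ℕ} : Continuous fun Z : Matrix (Fin k) (Fin m) ℂ => cmat Z := by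
  apply continuous_matrix
  intro i j
  obtain ⟨si, rfl⟩ := finSumFinEquiv.surjective i
  obtain ⟨sj, rfl⟩ := finSumFinEquiv.surjective j
  rcases si with a | a <;> rcases sj with b | b <;>
    simp only [cmat_ll, cmat_lr, cmat_rl, cmat_rr] <;> fun_prop

/-- Left inverse of `cmat` (on square matrices). -/
noncomputable def rinv {n : ℕ} (w : Matrix (Fin (n + n)) (Fin (n + n)) ℝ) :
    Matrix (Fin n) (Fin n) ℂ :=
  Matrix.of fun a b =>
    (w (finSumFinEquiv (Sum.inl a)) (finSumFinEquiv (Sum.inl b)) : ℂ) +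
      (w (finSumFinEquiv (Sum.inr a)) (finSumFinEquiv (Sum.inl b)) : ℂ) * Complex.I

lemma rinv_cmat {n : ℕ} (Z : Matrix (Fin n) (Fin n) ℂ) : rinv (cmat Z) = Z := by
  ext a b
  simp only [rinv, Matrix.of_apply, cmat_ll, cmat_rl, Complex.re_add_im]

lemma continuous_rinv {n : ℕ} :
    Continuous fun w : Matrix (Fin (n + n)) (Fin (n + n)) ℝ => rinv w := by
  apply continuous_matrix
  intro a b
  simp only [rinv, Matrix.of_apply]
  fun_prop

lemma continuous_mapre {n : ℕ} :
    Continuous fun Z : Matrix (Fin n) (Fin n) ℂ => Z.map Complex.re := by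
  apply continuous_matrix
  intro a b
  simp only [Matrix.map_apply]
  fun_prop

lemma continuous_mapofReal {n : ℕ} :
    Continuous fun x : Matrix (Fin n) (Fin n) ℝ => x.map Complex.ofReal := by
  apply continuous_matrix
  intro a b
  simp only [Matrix.map_apply]
  fun_prop

lemma cmat_submatrix_inl {n : ℕ} (Z : Matrix (Fin n) (Fin n) ℂ) :
    (cmat Z).submatrix (fun i : Fin n => finSumFinEquiv (Sum.inl i))
      (fun i : Fin n => finSumFinEquiv (Sum.inl i)) = Z.map Complex.re := by
  ext i j
  exact cmat_ll Z i j

end Aux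

section MainAux

variable {d : ℕ} {K : ∀ n : ℕ, Set (Fin d → Matrix (Fin n) (Fin n) ℝ)}

lemma inl_injective {n : ℕ} :
    Function.Injective (fun i : Fin n => (finSumFinEquiv (Sum.inl i) : Fin (n + n))) :=
  fun _ _ h => Sum.inl_injective (finSumFinEquiv.injective h)

lemma partB (hK : IsRealMatrixConvex d K) (n : ℕ) (x : Fin d → Matrix (Fin n) (Fin n) ℝ) :
    x ∈ K n ↔ (fun j => (x j).map Complex.ofReal) ∈ cplxify d K n := by
  constructor
  · intro hx
    have h := hK.1 n n x x hx hx
    show (fun j => cmat ((x j).map Complex.ofReal)) ∈ K (n + n)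
    have heq : (fun j => cmat ((x j).map Complex.ofReal)) = fun j => dsum (x j) (x j) :=
      funext fun j => cmat_map_ofReal (x j)
    rw [heq]; exact h
  · intro hx
    have h : (fun j => cmat ((x j).map Complex.ofReal)) ∈ K (n + n) := hx
    have h2 := compress_mem hK inl_injective h
    have heq : (fun j => (cmat ((x j).map Complex.ofReal)).submatrix
        (fun i : Fin n => finSumFinEquiv (Sum.inl i))
        (fun i : Fin n => finSumFinEquiv (Sum.inl i))) = x := by
      funext j; rw [cmat_submatrix_inl, map_re_ofReal]
    rwa [heq] at h2

lemma partD (hK : IsRealMatrixConvex d K) (n : ℕ) (z : Fin d → Matrix (Fin n) (Fin n) ℂ)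
    (hz : z ∈ cplxify d K n) : (fun j => (z j).map Complex.re) ∈ K n := by
  have h : (fun j => cmat (z j)) ∈ K (n + n) := hz
  have h2 := compress_mem hK inl_injective h
  have heq : (fun j => (cmat (z j)).submatrix
      (fun i : Fin n => finSumFinEquiv (Sum.inl i))
      (fun i : Fin n => finSumFinEquiv (Sum.inl i))) = fun j => (z j).map Complex.re :=
    funext fun j => cmat_submatrix_inl (z j)
  rwa [heq] at h2

lemma partC1 (hK : IsRealMatrixConvex d K) (n : ℕ) (z : Fin d → Matrix (Fin n) (Fin n) ℂ)
    (hz : z ∈ cplxify d K n) : (fun j => (z j).map (starRingEnd ℂ)) ∈ cplxify d K n := by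
  have h : (fun j => cmat (z j)) ∈ K (n + n) := hz
  have h2 := hK.2 (n + n) (n + n) _ (Jmat n) h
    (by rw [Jmat_transpose]; exact Jmat_mul_Jmat n)
  show (fun j => cmat ((z j).map (starRingEnd ℂ))) ∈ K (n + n)
  have heq : (fun j => cmat ((z j).map (starRingEnd ℂ)))
      = fun j => (Jmat n)ᵀ * cmat (z j) * Jmat n := by
    funext j; rw [cmat_conj, Jmat_transpose]
  rw [heq]; exact h2

lemma partA (hK : IsRealMatrixConvex d K) : IsComplexMatrixConvex d (cplxify d K) := by
  constructor
  · intro m p z w hz hw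
    have h1 := hK.1 (m + m) (p + p) _ _ hz hw
    have h2 := compress_mem hK (shuffle m p).injective h1
    show (fun j => cmat (dsum (z j) (w j))) ∈ K ((m + p) + (m + p))
    have heq : (fun j => cmat (dsum (z j) (w j)))
        = fun j => (dsum (cmat (z j)) (cmat (w j))).submatrix (shuffle m p) (shuffle m p) :=
      funext fun j => cmat_dsum (z j) (w j)
    rw [heq]; exact h2
  · intro m p z β hz hβ
    have hiso : (cmat β)ᵀ * cmat β = 1 := by
      rw [← cmat_conjTranspose, ← cmat_mul, hβ, cmat_one]
    have h1 := hK.2 (m + m) (p + p) _ (cmat β) hz hiso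
    show (fun j => cmat (βᴴ * z j * β)) ∈ K (p + p)
    have heq : (fun j => cmat (βᴴ * z j * β))
        = fun j => (cmat β)ᵀ * cmat (z j) * cmat β := by
      funext j; rw [cmat_mul, cmat_mul, cmat_conjTranspose]
    rw [heq]; exact h1

lemma continuous_cT {n : ℕ} :
    Continuous fun z : (Fin d → Matrix (Fin n) (Fin n) ℂ) => (fun j => cmat (z j)) :=
  continuous_pi fun j => continuous_cmat.comp (continuous_apply j)

lemma continuous_rT {n : ℕ} :
    Continuous fun x : (Fin d → Matrix (Fin n) (Fin n) ℝ)
      => (fun j => (x j).map Complex.ofReal) :=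
  continuous_pi fun j => continuous_mapofReal.comp (continuous_apply j)

lemma continuous_reT {n : ℕ} :
    Continuous fun z : (Fin d → Matrix (Fin n) (Fin n) ℂ)
      => (fun j => (z j).map Complex.re) :=
  continuous_pi fun j => continuous_mapre.comp (continuous_apply j)

lemma continuous_rI {n : ℕ} :
    Continuous fun w : (Fin d → Matrix (Fin (n + n)) (Fin (n + n)) ℝ)
      => (fun j => rinv (w j)) :=
  continuous_pi fun j => continuous_rinv.comp (continuous_apply j)

lemma partE_closed (hK : IsRealMatrixConvex d K) :
    (∀ n, IsClosed (K n)) ↔ (∀ n, IsClosed (cplxify d K n)) := by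
  constructor
  · intro h n
    exact (h (n + n)).preimage continuous_cT
  · intro h n
    have heq : K n = (fun x : (Fin d → Matrix (Fin n) (Fin n) ℝ)
        => (fun j => (x j).map Complex.ofReal)) ⁻¹' (cplxify d K n) :=
      Set.ext fun x => partB hK n x
    rw [heq]
    exact (h n).preimage continuous_rT

lemma partE_compact (hK : IsRealMatrixConvex d K) :
    (∀ n, IsCompact (K n)) ↔ (∀ n, IsCompact (cplxify d K n)) := by
  constructor
  · intro h n
    set cT := fun z : (Fin d → Matrix (Fin n) (Fin n) ℂ) => (fun j => cmat (z j)) with hcT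
    set rI := fun w : (Fin d → Matrix (Fin (n + n)) (Fin (n + n)) ℝ)
      => (fun j => rinv (w j)) with hrI
    have hleft : ∀ z, rI (cT z) = z := fun z => funext fun j => rinv_cmat (z j)
    have hrange : Set.range cT = {w | cT (rI w) = w} := by
      ext w
      constructor
      · rintro ⟨z, rfl⟩
        show cT (rI (cT z)) = cT z
        rw [hleft]
      · intro hw
        exact ⟨rI w, hw⟩
    have hclosed : IsClosed (Set.range cT) := by
      rw [hrange]
      exact isClosed_eq (continuous_cT.comp continuous_rI) continuous_id
    have hS : IsCompact (K (n + n) ∩ Set.range cT) := (h (n + n)).inter_right hclosed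
    have himg : cplxify d K n = rI '' (K (n + n) ∩ Set.range cT) := by
      ext z
      constructor
      · intro hz
        exact ⟨cT z, ⟨hz, ⟨z, rfl⟩⟩, hleft z⟩
      · rintro ⟨w, ⟨hwK, z', rfl⟩, rfl⟩
        rw [hleft]
        exact hwK
    rw [himg]
    exact hS.image continuous_rI
  · intro h n
    set rT := fun x : (Fin d → Matrix (Fin n) (Fin n) ℝ)
      => (fun j => (x j).map Complex.ofReal) with hrT
    set reT := fun z : (Fin d → Matrix (Fin n) (Fin n) ℂ)
      => (fun j => (z j).map Complex.re) with hreT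
    have hleft : ∀ x, reT (rT x) = x := fun x => funext fun j => map_re_ofReal (x j)
    have hrange : Set.range rT = {z | rT (reT z) = z} := by
      ext z
      constructor
      · rintro ⟨x, rfl⟩
        show rT (reT (rT x)) = rT x
        rw [hleft]
      · intro hz
        exact ⟨reT z, hz⟩
    have hclosed : IsClosed (Set.range rT) := by
      rw [hrange]
      exact isClosed_eq (continuous_rT.comp continuous_reT) continuous_id
    have hS : IsCompact (cplxify d K n ∩ Set.range rT) := (h n).inter_right hclosed
    have himg : K n = reT '' (cplxify d K n ∩ Set.range rT) := by
      ext x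
      constructor
      · intro hx
        exact ⟨rT x, ⟨(partB hK n x).1 hx, ⟨x, rfl⟩⟩, hleft x⟩
      · rintro ⟨z, ⟨hzc, y, rfl⟩, rfl⟩
        rw [hleft]
        exact (partB hK n y).2 hzc
    rw [himg]
    exact hS.image continuous_reT

end MainAux

theorem stmt_11 (d : ℕ) (hd : 1 ≤ d)
    (K : ∀ n : ℕ, Set (Fin d → Matrix (Fin n) (Fin n) ℝ))
    (hK : IsRealMatrixConvex d K) :
    -- (a)
    IsComplexMatrixConvex d (cplxify d K) ∧
    -- (b)
    (∀ (n : ℕ) (x : Fin d → Matrix (Fin n) (Fin n) ℝ),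
      x ∈ K n ↔ (fun j => (x j).map Complex.ofReal) ∈ cplxify d K n) ∧
    -- (c)
    (∀ (n : ℕ) (z : Fin d → Matrix (Fin n) (Fin n) ℂ),
      z ∈ cplxify d K n ↔ (fun j => (z j).map (starRingEnd ℂ)) ∈ cplxify d K n) ∧
    -- (d)
    (∀ (n : ℕ) (z : Fin d → Matrix (Fin n) (Fin n) ℂ),
      z ∈ cplxify d K n → (fun j => (z j).map Complex.re) ∈ K n) ∧
    -- (e)
    ((∀ n, IsClosed (K n)) ↔ (∀ n, IsClosed (cplxify d K n))) ∧
    ((∀ n, IsCompact (K n)) ↔ (∀ n, IsCompact (cplxify d K n))) := by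
  refine ⟨partA hK, partB hK, fun n z => ⟨partC1 hK n z, fun h => ?_⟩, partD hK,
    partE_closed hK, partE_compact hK⟩
  have h2 := partC1 hK n _ h
  have heq : (fun j => ((z j).map (starRingEnd ℂ)).map (starRingEnd ℂ)) = z := by
    funext j; ext a b; simp
  rwa [heq] at h2
end

section
/- Fix d ≥ 1 and let K be a real matrix convex set over ℝ^d. For every z ∈ (K_c)_n one has z = u_nᴴ · w · u_n, where w = (c(z_1), …, c(z_d)) ∈ K_{2n} is viewed as a tuple of complex matrices and u_n = (1/√2)[1_n; −i·1_n]. Consequently K_c is the smallest complex matrix convex set containing the image of K: if L is any complex matrix convex set over ℂ^d with {x + i·0 : x ∈ K_m} ⊆ L_m for all m, then (K_c)_m ⊆ L_m for all m. -/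
open Matrix
open scoped Kronecker

/-- The isometry `u_n = (1/√2) [1_n ; -i·1_n]` (a block column). -/
noncomputable def uMat (n : ℕ) : Matrix (Fin (n + n)) (Fin n) ℂ :=
  (((Real.sqrt 2 : ℝ) : ℂ))⁻¹ •
    (Matrix.reindex finSumFinEquiv (Equiv.refl (Fin n))
      (Matrix.fromRows (1 : Matrix (Fin n) (Fin n) ℂ)
        ((-Complex.I) • (1 : Matrix (Fin n) (Fin n) ℂ))))

lemma csq_aux : ((((Real.sqrt 2 : ℝ) : ℂ))⁻¹ * (((Real.sqrt 2 : ℝ) : ℂ))⁻¹ : ℂ) = 2⁻¹ := by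
  rw [← mul_inv, ← Complex.ofReal_mul, Real.mul_self_sqrt (by norm_num)]
  norm_num

lemma uMat_conj (n : ℕ) :
    (uMat n)ᴴ = (((Real.sqrt 2 : ℝ) : ℂ))⁻¹ •
      ((Matrix.fromCols (1 : Matrix (Fin n) (Fin n) ℂ)
        (Complex.I • (1 : Matrix (Fin n) (Fin n) ℂ))).submatrix id ⇑finSumFinEquiv.symm) := by
  rw [uMat, conjTranspose_smul]
  congr 1
  · simp [Complex.star_def, map_inv₀, Complex.conj_ofReal]
  · rw [reindex_apply, conjTranspose_submatrix,
      conjTranspose_fromRows_eq_fromCols_conjTranspose, conjTranspose_smul]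
    simp

lemma uMat_compress (n : ℕ) (X Y : Matrix (Fin n) (Fin n) ℂ) :
    (uMat n)ᴴ * (Matrix.reindex finSumFinEquiv finSumFinEquiv
      (Matrix.fromBlocks X (-Y) Y X)) * uMat n = X + Complex.I • Y := by
  rw [uMat_conj, uMat, reindex_apply, reindex_apply, Matrix.smul_mul, Matrix.mul_smul,
    Matrix.smul_mul, smul_smul, csq_aux,
    show ((Equiv.refl (Fin n)).symm : Fin n → Fin n) = id from rfl,
    submatrix_mul_equiv _ _ _ finSumFinEquiv.symm _,
    submatrix_mul_equiv _ _ _ finSumFinEquiv.symm _,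
    submatrix_id_id, fromCols_mul_fromBlocks, fromCols_mul_fromRows]
  simp only [one_mul, mul_one, Matrix.smul_mul, Matrix.mul_smul, smul_smul]
  match_scalars <;> simp [Complex.I_mul_I] <;> ring

lemma uMat_isometry (n : ℕ) : (uMat n)ᴴ * uMat n = 1 := by
  rw [uMat_conj, uMat, reindex_apply, Matrix.smul_mul, Matrix.mul_smul, smul_smul, csq_aux,
    show ((Equiv.refl (Fin n)).symm : Fin n → Fin n) = id from rfl,
    submatrix_mul_equiv _ _ _ finSumFinEquiv.symm _,
    submatrix_id_id, fromCols_mul_fromRows]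
  simp only [one_mul, mul_one, Matrix.smul_mul, Matrix.mul_smul, smul_smul]
  match_scalars <;> simp [Complex.I_mul_I] <;> ring

lemma cmat_map_ofReal_s12 {n : ℕ} (Z : Matrix (Fin n) (Fin n) ℂ) :
    (cmat Z).map Complex.ofReal = Matrix.reindex finSumFinEquiv finSumFinEquiv
      (Matrix.fromBlocks ((Z.map Complex.re).map Complex.ofReal)
        (-((Z.map Complex.im).map Complex.ofReal))
        ((Z.map Complex.im).map Complex.ofReal)
        ((Z.map Complex.re).map Complex.ofReal)) := by
  have hneg : (-(Z.map Complex.im)).map Complex.ofReal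
      = -((Z.map Complex.im).map Complex.ofReal) := by
    ext i j; simp
  rw [cmat, reindex_apply, reindex_apply, ← submatrix_map, fromBlocks_map, hneg,
    Matrix.map_map, Matrix.map_map]

lemma key_compress {n : ℕ} (Z : Matrix (Fin n) (Fin n) ℂ) :
    (uMat n)ᴴ * (cmat Z).map Complex.ofReal * uMat n = Z := by
  rw [cmat_map_ofReal_s12, uMat_compress]
  ext i j
  simp [Complex.ext_iff]

theorem stmt_12 (d : ℕ) (hd : 1 ≤ d)
    (K : ∀ n : ℕ, Set (Fin d → Matrix (Fin n) (Fin n) ℝ))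
    (hK : IsRealMatrixConvex d K) :
    -- every z ∈ (K_c)_n is the compression by u_n of the tuple w = c(z) ∈ K_{2n}
    (∀ (n : ℕ) (z : Fin d → Matrix (Fin n) (Fin n) ℂ), z ∈ cplxify d K n →
      ∀ j, z j = (uMat n)ᴴ * (cmat (z j)).map Complex.ofReal * uMat n) ∧
    -- K_c is the smallest complex matrix convex set containing the image of K
    (∀ L : ∀ n : ℕ, Set (Fin d → Matrix (Fin n) (Fin n) ℂ), IsComplexMatrixConvex d L →
      (∀ (m : ℕ) (x : Fin d → Matrix (Fin m) (Fin m) ℝ), x ∈ K m →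
        (fun j => (x j).map Complex.ofReal) ∈ L m) →
      ∀ m : ℕ, cplxify d K m ⊆ L m) := by
  constructor
  · intro n z hz j
    exact (key_compress (z j)).symm
  · intro L hL hKL m z hz
    have h1 := hKL (m + m) (fun j => cmat (z j)) hz
    have h2 := hL.2 (m + m) m _ (uMat m) h1 (uMat_isometry m)
    have h3 : (fun j => (uMat m)ᴴ * ((fun j => (cmat (z j)).map Complex.ofReal) j) * uMat m) = z := by
      funext j
      exact key_compress (z j)
    rwa [h3] at h2
end

section
/- (The polar commutes with complexification.) Fix d ≥ 1, let K be a real matrix convex set over ℝ^d, and let A = (A_1, …, A_d) ∈ (M_n(ℂ))^d. Then the following are equivalent: (i) the real tuple (c(A_1), …, c(A_d)) lies in (K°)_{2n}, i.e. for every m and every x ∈ K_m, ℜ(Σ_{j=1}^d x_j ⊗ c(A_j)) ≤ 1_{2mn}; (ii) for every m and every z ∈ (K_c)_m, ℜ_ℂ(Σ_{j=1}^d z_j ⊗ A_j) ≤ 1_{mn}, where ℜ_ℂ M = (M + Mᴴ)/2 and ≤ is the Loewner order on complex matrices. In other words, (K°)_c = (K_c)° under the canonical identification. -/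
open Matrix
open scoped Kronecker

open scoped ComplexOrder

/-- `ℜ_ℂ M = (M + Mᴴ)/2`. -/
noncomputable def reSymC {n : Type*} (M : Matrix n n ℂ) : Matrix n n ℂ :=
  (2 : ℂ)⁻¹ • (M + Mᴴ)


/-! ### Auxiliary machinery -/

noncomputable def etaVec {m n : ℕ} (ξ : Fin m × Fin n → ℂ) : Fin (m+m) × Fin (n+n) → ℝ :=
  fun p =>
    Sum.elim
      (fun i => Sum.elim (fun k => (ξ (i,k)).re) (fun k => (ξ (i,k)).im) (finSumFinEquiv.symm p.2))
      (fun i => Sum.elim (fun k => (ξ (i,k)).im) (fun k => -(ξ (i,k)).re) (finSumFinEquiv.symm p.2))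
      (finSumFinEquiv.symm p.1)

@[simp] lemma etaVec_ll {m n : ℕ} (ξ : Fin m × Fin n → ℂ) (i : Fin m) (k : Fin n) :
    etaVec ξ (finSumFinEquiv (Sum.inl i), finSumFinEquiv (Sum.inl k)) = (ξ (i,k)).re := by
  simp only [etaVec, Equiv.symm_apply_apply, Sum.elim_inl, Sum.elim_inr]
@[simp] lemma etaVec_lr {m n : ℕ} (ξ : Fin m × Fin n → ℂ) (i : Fin m) (k : Fin n) :
    etaVec ξ (finSumFinEquiv (Sum.inl i), finSumFinEquiv (Sum.inr k)) = (ξ (i,k)).im := by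
  simp only [etaVec, Equiv.symm_apply_apply, Sum.elim_inl, Sum.elim_inr]
@[simp] lemma etaVec_rl {m n : ℕ} (ξ : Fin m × Fin n → ℂ) (i : Fin m) (k : Fin n) :
    etaVec ξ (finSumFinEquiv (Sum.inr i), finSumFinEquiv (Sum.inl k)) = (ξ (i,k)).im := by
  simp only [etaVec, Equiv.symm_apply_apply, Sum.elim_inl, Sum.elim_inr]
@[simp] lemma etaVec_rr {m n : ℕ} (ξ : Fin m × Fin n → ℂ) (i : Fin m) (k : Fin n) :
    etaVec ξ (finSumFinEquiv (Sum.inr i), finSumFinEquiv (Sum.inr k)) = -(ξ (i,k)).re := by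
  simp only [etaVec, Equiv.symm_apply_apply, Sum.elim_inl, Sum.elim_inr]

lemma sum_prod_split {m n : ℕ} {α : Type*} [AddCommMonoid α]
    (f : Fin (m+m) × Fin (n+n) → α) :
    ∑ p : Fin (m+m) × Fin (n+n), f p
      = ∑ s : Fin m ⊕ Fin m, ∑ t : Fin n ⊕ Fin n, f (finSumFinEquiv s, finSumFinEquiv t) := by
  rw [← Fintype.sum_equiv (Equiv.prodCongr finSumFinEquiv finSumFinEquiv)
    (fun q => f (finSumFinEquiv q.1, finSumFinEquiv q.2)) f (fun q => rfl),
    Fintype.sum_prod_type]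

lemma etaVec_dot {m n : ℕ} (ξ ζ : Fin m × Fin n → ℂ) :
    etaVec ξ ⬝ᵥ etaVec ζ = 2 * (star ξ ⬝ᵥ ζ).re := by
  simp only [dotProduct]
  rw [sum_prod_split (fun p => etaVec ξ p * etaVec ζ p), Complex.re_sum, Fintype.sum_prod_type,
    Finset.mul_sum]
  simp only [Fintype.sum_sum_type, etaVec_ll, etaVec_lr, etaVec_rl, etaVec_rr, Finset.mul_sum,
    ← Finset.sum_add_distrib]
  refine Finset.sum_congr rfl fun i _ => Finset.sum_congr rfl fun k _ => ?_
  simp [Complex.mul_re, Complex.mul_im]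
  ring

@[simp] lemma cmat_apply {k m : ℕ} (Z : Matrix (Fin k) (Fin m) ℂ) (s : Fin k ⊕ Fin k)
    (t : Fin m ⊕ Fin m) :
    cmat Z (finSumFinEquiv s) (finSumFinEquiv t)
      = Matrix.fromBlocks (Z.map Complex.re) (-(Z.map Complex.im))
          (Z.map Complex.im) (Z.map Complex.re) s t := by
  simp [cmat]

lemma cmat_kron_mulVec {m n : ℕ} (Z : Matrix (Fin m) (Fin m) ℂ) (B : Matrix (Fin n) (Fin n) ℂ)
    (ξ : Fin m × Fin n → ℂ) :
    (cmat Z ⊗ₖ cmat B) *ᵥ etaVec ξ = etaVec ((Z ⊗ₖ B) *ᵥ ξ) := by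
  funext p
  obtain ⟨a, b⟩ := p
  obtain ⟨s, rfl⟩ := finSumFinEquiv.surjective a
  obtain ⟨t, rfl⟩ := finSumFinEquiv.surjective b
  have expand : ∀ (i : Fin m) (k : Fin n),
      ((Z ⊗ₖ B) *ᵥ ξ) (i, k) = ∑ i' : Fin m, ∑ k' : Fin n, Z i i' * B k k' * ξ (i', k') := by
    intro i k
    simp only [Matrix.mulVec, dotProduct, Fintype.sum_prod_type, kroneckerMap_apply]
  cases s <;> cases t <;>
  · simp only [Matrix.mulVec, dotProduct]
    rw [sum_prod_split]
    simp only [Fintype.sum_sum_type, kroneckerMap_apply, cmat_apply, etaVec_ll, etaVec_lr,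
      etaVec_rl, etaVec_rr, Matrix.fromBlocks_apply₁₁, Matrix.fromBlocks_apply₁₂,
      Matrix.fromBlocks_apply₂₁, Matrix.fromBlocks_apply₂₂, Matrix.map_apply, Matrix.neg_apply,
      etaVec_ll, etaVec_lr, etaVec_rl, etaVec_rr, expand, Complex.re_sum, Complex.im_sum,
      ← Finset.sum_add_distrib, ← Finset.sum_neg_distrib]
    apply Finset.sum_congr rfl
    intro i' _
    apply Finset.sum_congr rfl
    intro k' _
    simp only [Complex.mul_re, Complex.mul_im]
    ring

noncomputable def xiVec {m n : ℕ} (u : Fin m × Fin (n+n) → ℝ) : Fin m × Fin n → ℂ :=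
  fun p => ⟨u (p.1, finSumFinEquiv (Sum.inl p.2)), u (p.1, finSumFinEquiv (Sum.inr p.2))⟩

@[simp] lemma xiVec_re {m n : ℕ} (u : Fin m × Fin (n+n) → ℝ) (i : Fin m) (k : Fin n) :
    (xiVec u (i, k)).re = u (i, finSumFinEquiv (Sum.inl k)) := rfl
@[simp] lemma xiVec_im {m n : ℕ} (u : Fin m × Fin (n+n) → ℝ) (i : Fin m) (k : Fin n) :
    (xiVec u (i, k)).im = u (i, finSumFinEquiv (Sum.inr k)) := rfl

noncomputable def muVec {m n : ℕ} (ζ : Fin m × Fin n → ℂ) : Fin m × Fin (n+n) → ℝ :=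
  fun p => Sum.elim (fun k => (ζ (p.1, k)).re) (fun k => (ζ (p.1, k)).im) (finSumFinEquiv.symm p.2)

@[simp] lemma muVec_l {m n : ℕ} (ζ : Fin m × Fin n → ℂ) (i : Fin m) (k : Fin n) :
    muVec ζ (i, finSumFinEquiv (Sum.inl k)) = (ζ (i, k)).re := by
  simp only [muVec, Equiv.symm_apply_apply, Sum.elim_inl]
@[simp] lemma muVec_r {m n : ℕ} (ζ : Fin m × Fin n → ℂ) (i : Fin m) (k : Fin n) :
    muVec ζ (i, finSumFinEquiv (Sum.inr k)) = (ζ (i, k)).im := by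
  simp only [muVec, Equiv.symm_apply_apply, Sum.elim_inr]

lemma muVec_xiVec {m n : ℕ} (u : Fin m × Fin (n+n) → ℝ) : muVec (xiVec u) = u := by
  funext p
  obtain ⟨i, b⟩ := p
  obtain ⟨t, rfl⟩ := finSumFinEquiv.surjective b
  cases t
  · rw [muVec_l, xiVec_re]
  · rw [muVec_r, xiVec_im]

lemma sum_prod_split' {m n : ℕ} {α : Type*} [AddCommMonoid α] (f : Fin m × Fin (n+n) → α) :
    ∑ p : Fin m × Fin (n+n), f p
      = ∑ i : Fin m, ∑ t : Fin n ⊕ Fin n, f (i, finSumFinEquiv t) := by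
  rw [← Fintype.sum_equiv (Equiv.prodCongr (Equiv.refl (Fin m)) finSumFinEquiv)
    (fun q => f (q.1, finSumFinEquiv q.2)) f (fun q => rfl), Fintype.sum_prod_type]

lemma mu_dot {m n : ℕ} (u : Fin m × Fin (n+n) → ℝ) (ζ : Fin m × Fin n → ℂ) :
    u ⬝ᵥ muVec ζ = (star (xiVec u) ⬝ᵥ ζ).re := by
  simp only [dotProduct]
  rw [sum_prod_split', Complex.re_sum, Fintype.sum_prod_type]
  simp only [Fintype.sum_sum_type, muVec_l, muVec_r, ← Finset.sum_add_distrib]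
  apply Finset.sum_congr rfl
  intro i _
  apply Finset.sum_congr rfl
  intro k _
  simp only [Complex.mul_re, Pi.star_apply, Complex.star_def, Complex.conj_re, Complex.conj_im,
    xiVec_re, xiVec_im]
  ring

lemma kron_cmat_mulVec {m n : ℕ} (x : Matrix (Fin m) (Fin m) ℝ) (B : Matrix (Fin n) (Fin n) ℂ)
    (u : Fin m × Fin (n+n) → ℝ) :
    (x ⊗ₖ cmat B) *ᵥ u = muVec (((x.map (Complex.ofReal)) ⊗ₖ B) *ᵥ xiVec u) := by
  funext p
  obtain ⟨i, b⟩ := p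
  obtain ⟨t, rfl⟩ := finSumFinEquiv.surjective b
  have expand : ∀ (i : Fin m) (k : Fin n),
      (((x.map Complex.ofReal) ⊗ₖ B) *ᵥ xiVec u) (i, k)
        = ∑ i' : Fin m, ∑ k' : Fin n, (x i i' : ℂ) * B k k' * xiVec u (i', k') := by
    intro i k
    simp only [Matrix.mulVec, dotProduct, Fintype.sum_prod_type, kroneckerMap_apply,
      Matrix.map_apply]
  cases t <;>
  · simp only [Matrix.mulVec, dotProduct, muVec_l, muVec_r]
    rw [sum_prod_split']
    simp only [Fintype.sum_sum_type, kroneckerMap_apply, cmat_apply,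
      Matrix.fromBlocks_apply₁₁, Matrix.fromBlocks_apply₁₂,
      Matrix.fromBlocks_apply₂₁, Matrix.fromBlocks_apply₂₂, Matrix.map_apply, Matrix.neg_apply,
      expand, Complex.re_sum, Complex.im_sum, Fintype.sum_prod_type,
      ← Finset.sum_add_distrib]
    apply Finset.sum_congr rfl
    intro i' _
    apply Finset.sum_congr rfl
    intro k' _
    simp only [Complex.mul_re, Complex.mul_im, Complex.ofReal_re, Complex.ofReal_im,
      xiVec_re, xiVec_im]
    ring

lemma sum_mulVec {α p q ι : Type*} [NonUnitalNonAssocSemiring α] [Fintype q]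
    (s : Finset ι) (M : ι → Matrix p q α) (v : q → α) :
    (∑ j ∈ s, M j) *ᵥ v = ∑ j ∈ s, M j *ᵥ v := by
  induction s using Finset.cons_induction with
  | empty => simp [Matrix.zero_mulVec]
  | cons a s ha ih => simp [Finset.sum_cons, Matrix.add_mulVec, ih]

lemma etaVec_add {m n : ℕ} (ξ ζ : Fin m × Fin n → ℂ) :
    etaVec (ξ + ζ) = etaVec ξ + etaVec ζ := by
  funext p
  obtain ⟨a, b⟩ := p
  obtain ⟨s, rfl⟩ := finSumFinEquiv.surjective a
  obtain ⟨t, rfl⟩ := finSumFinEquiv.surjective b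
  cases s <;> cases t <;>
    simp only [etaVec_ll, etaVec_lr, etaVec_rl, etaVec_rr, Pi.add_apply, Complex.add_re,
      Complex.add_im, neg_add]

lemma etaVec_zero {m n : ℕ} : etaVec (0 : Fin m × Fin n → ℂ) = 0 := by
  funext p
  obtain ⟨a, b⟩ := p
  obtain ⟨s, rfl⟩ := finSumFinEquiv.surjective a
  obtain ⟨t, rfl⟩ := finSumFinEquiv.surjective b
  cases s <;> cases t <;>
  · simp only [etaVec_ll, etaVec_lr, etaVec_rl, etaVec_rr, Pi.zero_apply, Complex.zero_re,
      Complex.zero_im, neg_zero]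

lemma etaVec_sum {m n ι : Type*} : True := trivial

lemma etaVec_sum' {m n : ℕ} {ι : Type*} (s : Finset ι) (f : ι → (Fin m × Fin n → ℂ)) :
    etaVec (∑ j ∈ s, f j) = ∑ j ∈ s, etaVec (f j) := by
  induction s using Finset.cons_induction with
  | empty => simpa using etaVec_zero
  | cons a s ha ih => simp [Finset.sum_cons, etaVec_add, ih]

lemma muVec_add {m n : ℕ} (ξ ζ : Fin m × Fin n → ℂ) :
    muVec (ξ + ζ) = muVec ξ + muVec ζ := by
  funext p
  obtain ⟨i, b⟩ := p
  obtain ⟨t, rfl⟩ := finSumFinEquiv.surjective b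
  cases t <;>
  · simp only [muVec_l, muVec_r, Pi.add_apply, Complex.add_re, Complex.add_im]

lemma muVec_zero {m n : ℕ} : muVec (0 : Fin m × Fin n → ℂ) = 0 := by
  funext p
  obtain ⟨i, b⟩ := p
  obtain ⟨t, rfl⟩ := finSumFinEquiv.surjective b
  cases t <;>
  · simp only [muVec_l, muVec_r, Pi.zero_apply, Complex.zero_re, Complex.zero_im]

lemma muVec_sum {m n : ℕ} {ι : Type*} (s : Finset ι) (f : ι → (Fin m × Fin n → ℂ)) :
    muVec (∑ j ∈ s, f j) = ∑ j ∈ s, muVec (f j) := by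
  induction s using Finset.cons_induction with
  | empty => simpa using muVec_zero
  | cons a s ha ih => simp [Finset.sum_cons, muVec_add, ih]

lemma dot_conjT {p : Type*} [Fintype p] (M : Matrix p p ℂ) (ξ : p → ℂ) :
    star ξ ⬝ᵥ (Mᴴ *ᵥ ξ) = star (star ξ ⬝ᵥ (M *ᵥ ξ)) := by
  simp only [dotProduct, Matrix.mulVec, star_sum, star_mul', Matrix.conjTranspose_apply,
    Pi.star_apply, star_star, Finset.mul_sum]
  rw [Finset.sum_comm]
  exact Finset.sum_congr rfl fun i _ => Finset.sum_congr rfl fun j _ => by ring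

lemma star_dot_self_im {p : Type*} [Fintype p] (ξ : p → ℂ) : (star ξ ⬝ᵥ ξ).im = 0 := by
  rw [dotProduct, Complex.im_sum]
  apply Finset.sum_eq_zero
  intro i _
  simp only [Pi.star_apply, Complex.star_def, Complex.mul_im, Complex.conj_re, Complex.conj_im]
  ring

lemma dot_transpose {p : Type*} [Fintype p] (P : Matrix p p ℝ) (u : p → ℝ) :
    u ⬝ᵥ (Pᵀ *ᵥ u) = u ⬝ᵥ (P *ᵥ u) := by
  rw [Matrix.dotProduct_mulVec, Matrix.vecMul_transpose, dotProduct_comm]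

lemma reSymC_isHermitian {p : Type*} (M : Matrix p p ℂ) : (reSymC M).IsHermitian := by
  unfold Matrix.IsHermitian reSymC
  have h : star ((2:ℂ)⁻¹) = (2:ℂ)⁻¹ := by
    rw [star_inv₀]
    norm_num
  rw [Matrix.conjTranspose_smul, Matrix.conjTranspose_add, Matrix.conjTranspose_conjTranspose,
    add_comm Mᴴ M, h]

lemma quad_reSymC {p : Type*} [Fintype p] [DecidableEq p] (M : Matrix p p ℂ) (ξ : p → ℂ) :
    star ξ ⬝ᵥ ((1 - reSymC M) *ᵥ ξ)
      = (((star ξ ⬝ᵥ ξ).re - (star ξ ⬝ᵥ (M *ᵥ ξ)).re : ℝ) : ℂ) := by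
  rw [Matrix.sub_mulVec, Matrix.one_mulVec, dotProduct_sub, reSymC,
    Matrix.smul_mulVec, dotProduct_smul, Matrix.add_mulVec, dotProduct_add, dot_conjT]
  have h1 : star ξ ⬝ᵥ ξ = (((star ξ ⬝ᵥ ξ).re : ℝ) : ℂ) := by
    apply Complex.ext
    · simp
    · simp [star_dot_self_im]
  have h2 : star ξ ⬝ᵥ (M *ᵥ ξ) + star (star ξ ⬝ᵥ (M *ᵥ ξ))
      = ((2 * (star ξ ⬝ᵥ (M *ᵥ ξ)).re : ℝ) : ℂ) := by
    rw [← Complex.add_conj]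
    rfl
  rw [h2, smul_eq_mul]
  rw [h1]
  simp only [Complex.ofReal_re]
  push_cast
  ring

lemma reSym_isHermitian {p : Type*} (P : Matrix p p ℝ) : (reSym P).IsHermitian := by
  unfold Matrix.IsHermitian reSym
  have hQ : ∀ (Q : Matrix p p ℝ), Qᴴ = Qᵀ := fun _ => rfl
  rw [Matrix.conjTranspose_smul, hQ, Matrix.transpose_add, Matrix.transpose_transpose,
    add_comm Pᵀ P, star_trivial]

lemma cmat_ofReal {m : ℕ} (x : Matrix (Fin m) (Fin m) ℝ) :
    cmat (x.map Complex.ofReal) = dsum x x := by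
  unfold cmat dsum
  congr 1
  have hre : (x.map Complex.ofReal).map Complex.re = x := by ext i j; simp
  have him : (x.map Complex.ofReal).map Complex.im = 0 := by ext i j; simp
  rw [hre, him, neg_zero]

theorem stmt_15 (d : ℕ) (hd : 1 ≤ d)
    (K : ∀ n : ℕ, Set (Fin d → Matrix (Fin n) (Fin n) ℝ))
    (hK : IsRealMatrixConvex d K)
    (n : ℕ) (A : Fin d → Matrix (Fin n) (Fin n) ℂ) :
    (fun j => cmat (A j)) ∈ matPolar d K (n + n) ↔
    (∀ (m : ℕ) (z : Fin d → Matrix (Fin m) (Fin m) ℂ), z ∈ cplxify d K m →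
      loewnerLE (reSymC (∑ j, z j ⊗ₖ A j)) 1) := by
  constructor
  · intro hpol m z hz
    have hreal := hpol (m + m) (fun j => cmat (z j)) hz
    unfold loewnerLE at hreal ⊢
    rw [Matrix.posSemidef_iff_dotProduct_mulVec] at hreal ⊢
    constructor
    · exact Matrix.isHermitian_one.sub (reSymC_isHermitian _)
    · intro ξ
      rw [quad_reSymC, Complex.zero_le_real]
      have hstar : star (etaVec ξ) = etaVec ξ := by
        funext i; exact star_trivial _
      have key := hreal.2 (etaVec ξ)
      rw [hstar] at key
      have hP : etaVec ξ ⬝ᵥ (pairing (fun j => cmat (z j)) (fun j => cmat (A j)) *ᵥ etaVec ξ)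
          = 2 * (star ξ ⬝ᵥ ((∑ j, z j ⊗ₖ A j) *ᵥ ξ)).re := by
        rw [pairing, _root_.sum_mulVec]
        have h2 : ∀ j : Fin d, (cmat (z j) ⊗ₖ cmat (A j)) *ᵥ etaVec ξ
            = etaVec ((z j ⊗ₖ A j) *ᵥ ξ) := fun j => cmat_kron_mulVec _ _ _
        rw [Finset.sum_congr rfl fun j _ => h2 j, ← etaVec_sum', ← _root_.sum_mulVec, etaVec_dot]
      have e1 : etaVec ξ ⬝ᵥ
            ((1 - reSym (pairing (fun j => cmat (z j)) (fun j => cmat (A j)))) *ᵥ etaVec ξ)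
          = 2 * (star ξ ⬝ᵥ ξ).re - 2 * (star ξ ⬝ᵥ ((∑ j, z j ⊗ₖ A j) *ᵥ ξ)).re := by
        rw [Matrix.sub_mulVec, Matrix.one_mulVec, dotProduct_sub, reSym,
          Matrix.smul_mulVec, dotProduct_smul, Matrix.add_mulVec, dotProduct_add,
          dot_transpose, hP, etaVec_dot ξ ξ]
        simp only [smul_eq_mul]
        ring
      rw [e1] at key
      linarith
  · intro hC m x hx
    unfold loewnerLE
    rw [Matrix.posSemidef_iff_dotProduct_mulVec]
    constructor
    · exact Matrix.isHermitian_one.sub (reSym_isHermitian _)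
    · intro u
      have hstar : star u = u := by funext i; exact star_trivial _
      rw [hstar]
      have hz : (fun j => (x j).map Complex.ofReal) ∈ cplxify d K m := by
        show (fun j => cmat ((x j).map Complex.ofReal)) ∈ K (m + m)
        have hcm : (fun j => cmat ((x j).map Complex.ofReal))
            = fun j => dsum (x j) (x j) := by
          funext j; exact cmat_ofReal (x j)
        rw [hcm]
        exact hK.1 m m x x hx hx
      have hCx := hC m _ hz
      have key := (Matrix.posSemidef_iff_dotProduct_mulVec.mp hCx).2 (xiVec u)
      rw [quad_reSymC, Complex.zero_le_real] at key
      have hP : u ⬝ᵥ (pairing x (fun j => cmat (A j)) *ᵥ u)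
          = (star (xiVec u) ⬝ᵥ
              ((∑ j, ((x j).map Complex.ofReal) ⊗ₖ A j) *ᵥ xiVec u)).re := by
        rw [pairing, _root_.sum_mulVec]
        have h2 : ∀ j : Fin d, (x j ⊗ₖ cmat (A j)) *ᵥ u
            = muVec ((((x j).map Complex.ofReal) ⊗ₖ A j) *ᵥ xiVec u) :=
          fun j => kron_cmat_mulVec _ _ _
        rw [Finset.sum_congr rfl fun j _ => h2 j, ← muVec_sum, ← _root_.sum_mulVec, mu_dot]
      have hU : u ⬝ᵥ u = (star (xiVec u) ⬝ᵥ xiVec u).re := by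
        nth_rewrite 2 [← muVec_xiVec u]
        rw [mu_dot]
      have e1 : u ⬝ᵥ ((1 - reSym (pairing x (fun j => cmat (A j)))) *ᵥ u)
          = (star (xiVec u) ⬝ᵥ xiVec u).re
            - (star (xiVec u) ⬝ᵥ
                ((∑ j, ((x j).map Complex.ofReal) ⊗ₖ A j) *ᵥ xiVec u)).re := by
        rw [Matrix.sub_mulVec, Matrix.one_mulVec, dotProduct_sub, reSym,
          Matrix.smul_mulVec, dotProduct_smul, Matrix.add_mulVec, dotProduct_add,
          dot_transpose, hP, hU]
        simp only [smul_eq_mul]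
        ring
      rw [e1]
      linarith
end
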